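/- arXiv:2402.12549 — 3 statements merged into one kernel-verified Lean document; each statement's English description precedes it below -/
import Mathlib

section
/- For every integer n ≥ 1, FFW_2(n) = Σ_{j=1}^{n-1} d(j) − d(n) + 1. -/
open Finset Filter

namespace PaperFFW

/-- Finite q-Pochhammer symbol `(a;q)_n`. -/
def qPoch (a q : ℂ) (n : ℕ) : ℂ := ∏ j ∈ Finset.range n, (1 - a * q ^ j)

/-- Infinite q-Pochhammer symbol `(a;q)_∞`. -/
noncomputable def qPochInf (a q : ℂ) : ℂ := ∏' j : ℕ, (1 - a * q ^ j)

/-- Gaussian binomial coefficient `[n choose k]_q`. -/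
noncomputable def qBinom (n k : ℕ) (q : ℂ) : ℂ :=
  if k ≤ n then qPoch q q n / (qPoch q q k * qPoch q q (n - k)) else 0

/-- The `k`-th smallest part of a partition (1-indexed);
`0` if the partition has fewer than `k` parts, and `0` for `k = 0`. -/
def kthPart {n : ℕ} (k : ℕ) (π : n.Partition) : ℕ :=
  match k with
  | 0 => 0
  | k + 1 => (π.parts.sort (· ≤ ·)).getD k 0

/-- The number of parts `#(π)`. -/
def numParts {n : ℕ} (π : n.Partition) : ℕ := Multiset.card π.parts

/-- The set `𝒟(n)` of partitions of `n` into distinct parts. -/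
def distinctPartitions (n : ℕ) : Finset (Nat.Partition n) :=
  Finset.univ.filter fun π => π.parts.Nodup

/-- The set `𝒟₂(n)` of partitions of `n` into distinct parts with at least two parts. -/
def distinctPartitions2 (n : ℕ) : Finset (Nat.Partition n) :=
  Finset.univ.filter fun π => π.parts.Nodup ∧ 2 ≤ Multiset.card π.parts

/-- `FFW_k(n) = Σ_{π ∈ 𝒟(n)} (-1)^{#(π)} s_k(π)`. -/
def FFW (k n : ℕ) : ℤ :=
  ∑ π ∈ distinctPartitions n, (-1) ^ numParts π * (kthPart k π : ℤ)

/-- `FFW_k(z,n) = Σ_{π ∈ 𝒟(n)} (-1)^{#(π)} z^{s_k(π)}`. -/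
noncomputable def FFWz (k : ℕ) (z : ℂ) (n : ℕ) : ℂ :=
  ∑ π ∈ distinctPartitions n, (-1) ^ numParts π * z ^ kthPart k π

/-- `d_{≥k}(n)`: the number of divisors of `n` that are at least `k`. -/
def dGE (k n : ℕ) : ℕ := (n.divisors.filter fun d => k ≤ d).card


open Polynomial

noncomputable section


/-- Signed count of subsets of `[m, N]` (equivalently, of `[m, ∞)`) with sum `N`. -/
def gg (m N : ℕ) : ℤ :=
  ∑ S ∈ (Finset.Icc m N).powerset.filter (fun S => S.sum id = N), (-1) ^ S.card

def Phi (c M : ℕ) : Polynomial ℤ := ∏ j ∈ Finset.range M, (1 - X ^ (c + 1 + j))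

def Psi (M C : ℕ) : Polynomial ℤ := ∏ j ∈ Finset.range (M + 1), (1 - X ^ (C + j))

def FF (M C : ℕ) : Polynomial ℤ := ∑ c ∈ Finset.range C, X ^ c * Phi c M

def UU (M C : ℕ) : Polynomial ℤ := ∑ c ∈ Finset.range C, (Phi c M - 1)

lemma dvd_sub_iff' {a j : ℕ} (h : a ≤ j) : a ∣ (j - a) ↔ a ∣ j := by
  constructor
  · intro hd
    have h2 := Nat.dvd_add hd (dvd_refl a)
    rwa [Nat.sub_add_cancel h] at h2
  · intro hd
    exact Nat.dvd_sub hd (dvd_refl a)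

lemma Psi_eq (M C : ℕ) : Psi M C = (1 - X ^ C) * Phi C M := by
  rw [Psi, Finset.prod_range_succ']
  have h : (∏ j ∈ Finset.range M, (1 - X ^ (C + (j + 1))) : Polynomial ℤ) = Phi C M := by
    apply Finset.prod_congr rfl
    intro j _
    congr 2
    omega
  rw [h, add_zero, mul_comm]

lemma I1 (M C : ℕ) : (1 - X ^ (M + 1)) * FF M C = Psi M C := by
  induction C with
  | zero =>
    have h0 : (0:ℕ) ∈ Finset.range (M + 1) := by simp
    have h : Psi M 0 = 0 := by
      apply Finset.prod_eq_zero h0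
      simp
    simp [FF, h]
  | succ C ih =>
    rw [FF, Finset.sum_range_succ, ← FF, mul_add, ih, Psi_eq]
    have hPsi : Psi M (C + 1) = Phi C M * (1 - X ^ (C + 1 + M)) := by
      rw [Psi, Finset.prod_range_succ]; rfl
    rw [hPsi]
    have hx : (X:Polynomial ℤ) ^ (M + 1) * X ^ C = X ^ (C + 1 + M) := by
      rw [← pow_add]; congr 1; omega
    calc (1 - X ^ C) * Phi C M + (1 - X ^ (M + 1)) * (X ^ C * Phi C M)
        = Phi C M * (1 + (- X^C + X^C) - X ^ (M+1) * X^C) := by ring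
      _ = Phi C M * (1 - X ^ (C + 1 + M)) := by rw [hx]; ring

lemma low_coeff_prod (C t j : ℕ) (hj : j < C) :
    (∏ i ∈ Finset.range t, (1 - X ^ (C + i)) : Polynomial ℤ).coeff j
      = if j = 0 then 1 else 0 := by
  induction t with
  | zero => simp [Polynomial.coeff_one]
  | succ t ih =>
    rw [Finset.prod_range_succ, mul_sub, mul_one, Polynomial.coeff_sub, ih,
      Polynomial.coeff_mul_X_pow']
    have h : ¬ (C + t ≤ j) := by omega
    simp [h]

lemma Psi_coeff (M C j : ℕ) (hj : j < C) :
    (Psi M C).coeff j = if j = 0 then 1 else 0 := low_coeff_prod C (M+1) j hj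

lemma FF_coeff (M C : ℕ) : ∀ j, j < C →
    (FF M C).coeff j = if (M + 1) ∣ j then 1 else 0 := by
  intro j
  induction j using Nat.strong_induction_on with
  | _ j ih =>
    intro hj
    have e1 : (if j = 0 then (1:ℤ) else 0)
        = (FF M C).coeff j - (if M + 1 ≤ j then (FF M C).coeff (j - (M+1)) else 0) := by
      rw [← Psi_coeff M C j hj, ← I1, sub_mul, one_mul, Polynomial.coeff_sub,
        mul_comm, Polynomial.coeff_mul_X_pow']
    rcases Nat.eq_zero_or_pos j with rfl | hpos
    · simp only [if_pos rfl, Nat.not_succ_le_zero, if_neg, Nat.add_one_ne_zero] at e1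
      have : (M+1) ∣ 0 := Nat.dvd_zero _
      rw [if_pos this]
      simp at e1
      linarith
    · have hj0 : j ≠ 0 := by omega
      rw [if_neg hj0] at e1
      by_cases h : M + 1 ≤ j
      · rw [if_pos h, ih (j - (M+1)) (by omega) (by omega)] at e1
        by_cases hd : (M+1) ∣ j
        · rw [if_pos hd]
          rw [if_pos ((dvd_sub_iff' h).mpr hd)] at e1
          linarith
        · rw [if_neg hd]
          rw [if_neg (fun hc => hd ((dvd_sub_iff' h).mp hc))] at e1
          linarith
      · rw [if_neg h] at e1
        have hd : ¬ (M+1) ∣ j := fun hc => h (Nat.le_of_dvd hpos hc)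
        rw [if_neg hd]
        linarith

lemma UU_zero (C : ℕ) : UU 0 C = 0 := by
  simp [UU, Phi]

lemma UU_succ (M C : ℕ) : UU (M + 1) C = UU M C - X ^ (M + 1) * FF M C := by
  rw [UU, UU, FF, Finset.mul_sum, ← Finset.sum_sub_distrib]
  apply Finset.sum_congr rfl
  intro c _
  have hPhi : Phi c (M + 1) = Phi c M * (1 - X ^ (c + 1 + M)) := Finset.prod_range_succ _ _
  have hx : (X:Polynomial ℤ) ^ (M + 1) * X ^ c = X ^ (c + 1 + M) := by
    rw [← pow_add]; congr 1; omega
  rw [hPhi]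
  calc Phi c M * (1 - X ^ (c + 1 + M)) - 1
      = (Phi c M - 1) - X ^ (c+1+M) * Phi c M := by ring
    _ = Phi c M - 1 - X ^ (M+1) * (X ^ c * Phi c M) := by rw [← mul_assoc, hx]

lemma UU_coeff (C n : ℕ) (h1 : 1 ≤ n) (h2 : n < C) : ∀ M,
    (UU M C).coeff n = -(((Finset.Icc 1 M).filter (fun k => k ∣ n)).card : ℤ) := by
  intro M
  induction M with
  | zero => simp [UU_zero]
  | succ M ih =>
    rw [UU_succ, Polynomial.coeff_sub, ih]
    have e2 : (X ^ (M+1) * FF M C).coeff n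
        = if M + 1 ≤ n then (FF M C).coeff (n - (M+1)) else 0 := by
      rw [mul_comm, Polynomial.coeff_mul_X_pow']
    have hIcc : Finset.Icc 1 (M + 1) = insert (M+1) (Finset.Icc 1 M) := by
      ext x
      simp only [Finset.mem_Icc, Finset.mem_insert]
      omega
    rw [hIcc, Finset.filter_insert]
    by_cases hd : (M + 1) ∣ n
    · have hle : M + 1 ≤ n := Nat.le_of_dvd (by omega) hd
      rw [e2, if_pos hle, FF_coeff M C _ (by omega), if_pos ((dvd_sub_iff' hle).mpr hd),
        if_pos hd, Finset.card_insert_of_notMem (by simp)]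
      push_cast
      ring
    · rw [if_neg hd]
      by_cases hle : M + 1 ≤ n
      · rw [e2, if_pos hle, FF_coeff M C _ (by omega),
          if_neg (fun hc => hd ((dvd_sub_iff' hle).mp hc))]
        ring
      · rw [e2, if_neg hle]; ring

lemma prod_one_sub_X (T : Finset ℕ) :
    (∏ j ∈ T, (1 - X ^ j) : Polynomial ℤ)
      = ∑ S ∈ T.powerset, C ((-1:ℤ) ^ S.card) * X ^ (S.sum id) := by
  calc (∏ j ∈ T, (1 - X ^ j) : Polynomial ℤ)
      = ∏ j ∈ T, (-X ^ j + 1) := Finset.prod_congr rfl (fun j _ => by ring)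
    _ = ∑ S ∈ T.powerset, (∏ i ∈ S, (-X ^ i : Polynomial ℤ)) * ∏ i ∈ T \ S, 1 :=
        Finset.prod_add _ _ _
    _ = _ := by
        apply Finset.sum_congr rfl
        intro S _
        rw [Finset.prod_const_one, mul_one]
        have h1 : ∏ i ∈ S, (-X ^ i : Polynomial ℤ)
            = (-1) ^ S.card * ∏ i ∈ S, (X ^ i : Polynomial ℤ) := by
          rw [← Finset.prod_const, ← Finset.prod_mul_distrib]
          exact Finset.prod_congr rfl (fun i _ => by ring)
        rw [h1, Finset.prod_pow_eq_pow_sum]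
        congr 1
        simp [map_pow]

lemma coeff_prod_one_sub (T : Finset ℕ) (N : ℕ) :
    (∏ j ∈ T, (1 - X ^ j) : Polynomial ℤ).coeff N
      = ∑ S ∈ T.powerset.filter (fun S => S.sum id = N), (-1) ^ S.card := by
  rw [prod_one_sub_X, Polynomial.finset_sum_coeff, Finset.sum_filter]
  apply Finset.sum_congr rfl
  intro S _
  rw [Polynomial.coeff_C_mul, Polynomial.coeff_X_pow]
  by_cases h : (∑ x ∈ S, x) = N
  · simp [h]
  · have h2 : ¬ (N = ∑ x ∈ S, x) := fun hc => h hc.symm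
    simp [h, h2]

lemma Phi_eq_Icc (c M : ℕ) :
    Phi c M = ∏ j ∈ Finset.Icc (c+1) (c+M), (1 - X ^ j) := by
  have himg : Finset.Icc (c+1) (c+M) = (Finset.range M).image (fun j => c + 1 + j) := by
    ext x
    simp only [Finset.mem_Icc, Finset.mem_image, Finset.mem_range]
    constructor
    · intro ⟨h1, h2⟩; exact ⟨x - (c+1), by omega, by omega⟩
    · rintro ⟨j, hj, rfl⟩; omega
  rw [himg, Finset.prod_image (fun a _ b _ h => by omega)]
  rfl

lemma Phi_coeff (c M N : ℕ) (h : N ≤ c + M) : (Phi c M).coeff N = gg (c+1) N := by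
  rw [Phi_eq_Icc, coeff_prod_one_sub, gg]
  apply Finset.sum_congr _ (fun _ _ => rfl)
  ext S
  simp only [Finset.mem_filter, Finset.mem_powerset]
  constructor
  · intro ⟨hsub, hsum⟩
    refine ⟨fun x hx => ?_, hsum⟩
    have hx1 := hsub hx
    rw [Finset.mem_Icc] at hx1 ⊢
    refine ⟨hx1.1, ?_⟩
    have : x ≤ S.sum id := Finset.single_le_sum (fun i _ => Nat.zero_le (id i)) hx
    omega
  · intro ⟨hsub, hsum⟩
    exact ⟨hsub.trans (Finset.Icc_subset_Icc_right h), hsum⟩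

lemma gg_zero_of_lt {m N : ℕ} (h : N < m) (hN : 1 ≤ N) : gg m N = 0 := by
  rw [gg]
  have hIcc : Finset.Icc m N = ∅ := by
    apply Finset.Icc_eq_empty; omega
  rw [hIcc]
  have : (∅ : Finset ℕ).powerset.filter (fun S => S.sum id = N) = ∅ := by
    ext S
    simp only [Finset.powerset_empty, Finset.mem_filter, Finset.mem_singleton,
      Finset.notMem_empty, iff_false]
    rintro ⟨rfl, hs⟩
    simp at hs
    omega
  rw [this, Finset.sum_empty]

lemma sum_Icc_gg (s : ℕ) (f : ℕ → ℤ) :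
    ∑ m ∈ Finset.Icc 1 s, f m = ∑ c ∈ Finset.range s, f (c + 1) := by
  induction s with
  | zero => simp
  | succ s ih =>
    have hins : Finset.Icc 1 (s+1) = insert (s+1) (Finset.Icc 1 s) := by
      ext x; simp only [Finset.mem_Icc, Finset.mem_insert]; omega
    rw [Finset.sum_range_succ, ← ih, hins, Finset.sum_insert (by simp), add_comm]

lemma C_core (s : ℕ) (hs : 2 ≤ s) : ∑ m ∈ Finset.Icc 1 s, gg m (s - m) = 0 := by
  obtain ⟨j, rfl⟩ : ∃ j, s = j + 1 := ⟨s - 1, by omega⟩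
  have hj : 1 ≤ j := by omega
  have h1 : (FF j (j+1)).coeff j = 0 := by
    rw [FF_coeff j (j+1) j (by omega)]
    have hnd : ¬ (j + 1) ∣ j := by
      intro hd
      have := Nat.le_of_dvd (by omega) hd
      omega
    simp [hnd]
  have h2 : (FF j (j+1)).coeff j = ∑ c ∈ Finset.range (j+1), gg (c+1) (j - c) := by
    rw [FF, Polynomial.finset_sum_coeff]
    apply Finset.sum_congr rfl
    intro c hc
    rw [Finset.mem_range] at hc
    have hcj : c ≤ j := by omega
    rw [mul_comm, Polynomial.coeff_mul_X_pow', if_pos hcj, Phi_coeff c j (j - c) (by omega)]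
  rw [sum_Icc_gg]
  rw [h2] at h1
  rw [← h1]
  apply Finset.sum_congr rfl
  intro c _
  congr 1
  omega

lemma A_core (n : ℕ) (hn : 1 ≤ n) :
    ∑ m ∈ Finset.Icc 1 n, gg m n = -(n.divisors.card : ℤ) := by
  have h1 := UU_coeff (n+1) n hn (by omega) n
  have h2 : (UU n (n+1)).coeff n = ∑ c ∈ Finset.range (n+1), gg (c+1) n := by
    rw [UU, Polynomial.finset_sum_coeff]
    apply Finset.sum_congr rfl
    intro c _
    rw [Polynomial.coeff_sub, Phi_coeff c n n (by omega), Polynomial.coeff_one,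
      if_neg (by omega : ¬ n = 0), sub_zero]
  have h3 : ∑ c ∈ Finset.range (n+1), gg (c+1) n
      = (∑ m ∈ Finset.Icc 1 n, gg m n) + gg (n+1) n := by
    rw [sum_Icc_gg, Finset.sum_range_succ]
  have h4 : gg (n+1) n = 0 := gg_zero_of_lt (by omega) hn
  have h5 : n.divisors = (Finset.Icc 1 n).filter (fun k => k ∣ n) := by
    ext k
    simp only [Nat.mem_divisors, Finset.mem_filter, Finset.mem_Icc]
    constructor
    · intro ⟨hk, _⟩
      exact ⟨⟨Nat.one_le_iff_ne_zero.mpr (by rintro rfl; simp at hk; omega),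
        Nat.le_of_dvd (by omega) hk⟩, hk⟩
    · intro ⟨_, hk⟩
      exact ⟨hk, by omega⟩
  rw [h2, h3, h4, add_zero] at h1
  rw [h1, h5]

def Fn (n : ℕ) : Finset (Finset ℕ) :=
  ((Finset.range (n+1)).powerset).filter (fun S => 0 ∉ S ∧ S.sum id = n)

def s2 (S : Finset ℕ) : ℕ := (Finset.sort S (· ≤ ·)).getD 1 0

/-- list-level characterization -/
lemma list_char (m : ℕ) (hm : 1 ≤ m) : ∀ (l : List ℕ), l.Pairwise (· ≤ ·) →
    (m ≤ l.getD 1 0 ↔ (2 ≤ l.length ∧ (l.filter (fun x => x < m)).length ≤ 1)) := by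
  intro l hl
  match l with
  | [] => simp; omega
  | [a] => simp; omega
  | a :: b :: t =>
    have hab : a ≤ b := (List.pairwise_cons.mp hl).1 b (by simp)
    have hbt : ∀ x ∈ t, b ≤ x := ((List.pairwise_cons.mp hl).2 |> List.pairwise_cons.mp).1
    simp only [List.getD_cons_succ, List.getD_cons_zero, List.length_cons,
      List.filter_cons]
    constructor
    · intro hmb
      refine ⟨by omega, ?_⟩
      have hb : ¬ (b < m) := by omega
      have ht : t.filter (fun x => x < m) = [] := by
        apply List.filter_eq_nil_iff.mpr
        intro x hx
        have := hbt x hx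
        simp
        omega
      by_cases ha : a < m <;> simp [ha, hb, ht]
    · intro ⟨_, hcnt⟩
      by_contra hmb
      push_neg at hmb
      have ha : a < m := by omega
      have hb : b < m := by omega
      simp [ha, hb] at hcnt

lemma filter_card_eq (S : Finset ℕ) (m : ℕ) :
    (S.filter (· < m)).card
      = ((Finset.sort S (· ≤ ·)).filter (fun x => x < m)).length := by
  have h : ↑(Finset.sort S (· ≤ ·)) = S.val := Finset.sort_eq _ _
  rw [Finset.card, Finset.filter_val]
  conv_lhs => rw [← h]
  rw [Multiset.filter_coe, Multiset.coe_card]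

lemma s2_char {S : Finset ℕ} {m : ℕ} (hm : 1 ≤ m) :
    m ≤ s2 S ↔ (2 ≤ S.card ∧ (S.filter (· < m)).card ≤ 1) := by
  have h := list_char m hm (Finset.sort S (· ≤ ·)) (Finset.pairwise_sort _ _)
  rw [s2, h, Finset.length_sort, filter_card_eq]

lemma s2_mem_or_zero (S : Finset ℕ) : s2 S ∈ S ∨ s2 S = 0 := by
  rw [s2]
  by_cases h : 1 < (Finset.sort S (· ≤ ·)).length
  · left
    rw [List.getD_eq_getElem _ _ h]
    have := List.getElem_mem h
    rwa [← Finset.mem_sort (· ≤ ·)]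
  · right
    have hlen : (Finset.sort S (· ≤ ·)).length ≤ 1 := by omega
    exact List.getD_eq_default _ _ hlen

lemma mem_le_sum {S : Finset ℕ} {x : ℕ} (hx : x ∈ S) : x ≤ S.sum id :=
  Finset.single_le_sum (fun i _ => Nat.zero_le (id i)) hx

lemma mem_Fn {n : ℕ} {S : Finset ℕ} :
    S ∈ Fn n ↔ (S ⊆ Finset.range (n+1) ∧ 0 ∉ S ∧ S.sum id = n) := by
  rw [Fn, Finset.mem_filter, Finset.mem_powerset]

lemma s2_le_of_mem_Fn {n : ℕ} {S : Finset ℕ} (hS : S ∈ Fn n) : s2 S ≤ n := by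
  rcases s2_mem_or_zero S with h | h
  · have := mem_le_sum h
    rw [(mem_Fn.mp hS).2.2] at this
    exact this
  · omega

lemma s2_indicator {n : ℕ} {S : Finset ℕ} (hS : S ∈ Fn n) :
    (s2 S : ℤ) = ∑ m ∈ Finset.Icc 1 n, (if m ≤ s2 S then (1:ℤ) else 0) := by
  have hle := s2_le_of_mem_Fn hS
  rw [Finset.sum_boole]
  have h : (Finset.Icc 1 n).filter (fun m => m ≤ s2 S) = Finset.Icc 1 (s2 S) := by
    ext x
    simp only [Finset.mem_filter, Finset.mem_Icc]
    omega
  rw [h, Nat.card_Icc]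
  simp

lemma FFW_two_eq (n : ℕ) :
    FFW 2 n = ∑ S ∈ Fn n, (-1) ^ S.card * (s2 S : ℤ) := by
  rw [FFW]
  apply Finset.sum_bij
    (i := fun (π : Nat.Partition n) (hπ : π ∈ distinctPartitions n) => (⟨π.parts, (Finset.mem_filter.mp hπ).2⟩ : Finset ℕ))
  · -- maps into Fn n
    intro π hπ
    rw [mem_Fn]
    have hsum : (⟨π.parts, (Finset.mem_filter.mp hπ).2⟩ : Finset ℕ).sum id = n := by
      show (π.parts.map id).sum = n
      rw [Multiset.map_id, π.parts_sum]
    refine ⟨?_, ?_, hsum⟩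
    · intro x hx
      have hx' : x ∈ π.parts := hx
      have h1 : x ≤ π.parts.sum := Multiset.single_le_sum (fun i _ => Nat.zero_le i) _ hx'
      rw [π.parts_sum] at h1
      rw [Finset.mem_range]
      omega
    · intro h0
      have h0' : (0:ℕ) ∈ π.parts := h0
      exact absurd (π.parts_pos h0') (by omega)
  · -- injective
    intro π1 h1 π2 h2 heq
    have : π1.parts = π2.parts := congrArg Finset.val heq
    exact Nat.Partition.ext this
  · -- surjective
    intro S hS
    rw [mem_Fn] at hS
    refine ⟨⟨S.val, ?_, ?_⟩, ?_, ?_⟩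
    · intro i hi
      have : i ∈ S := hi
      have h0 : i ≠ 0 := by rintro rfl; exact hS.2.1 this
      omega
    · have := hS.2.2
      rwa [Finset.sum, Multiset.map_id] at this
    · rw [distinctPartitions, Finset.mem_filter]
      exact ⟨Finset.mem_univ _, S.nodup⟩
    · cases S
      rfl
  · -- values agree
    intro π hπ
    rfl


lemma insert_filter_small {m a N : ℕ} (ham : a < m) {T : Finset ℕ}
    (hT : T ⊆ Finset.Icc m N) : (insert a T).filter (· < m) = {a} := by
  ext x
  simp only [Finset.mem_filter, Finset.mem_insert, Finset.mem_singleton]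
  constructor
  · rintro ⟨hx | hx, hlt⟩
    · exact hx
    · have := hT hx
      rw [Finset.mem_Icc] at this
      omega
  · rintro rfl
    exact ⟨Or.inl rfl, by omega⟩

lemma E_eq (n m : ℕ) (hm1 : 1 ≤ m) (hmn : m ≤ n) (hn : 1 ≤ n) :
    ∑ S ∈ (Fn n).filter (fun S => m ≤ s2 S), (-1:ℤ) ^ S.card
      = gg m n + 1 - ∑ a ∈ Finset.Icc 1 (m-1), gg m (n - a) := by
  classical
  rw [← Finset.sum_filter_add_sum_filter_not ((Fn n).filter (fun S => m ≤ s2 S))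
    (fun S => (S.filter (· < m)).card = 0)]
  have hA : (((Fn n).filter (fun S => m ≤ s2 S)).filter
      (fun S => (S.filter (· < m)).card = 0))
      = ((Finset.Icc m n).powerset.filter (fun S => S.sum id = n)).filter
          (fun S => 2 ≤ S.card) := by
    ext S
    simp only [Finset.mem_filter, Finset.mem_powerset, mem_Fn]
    constructor
    · rintro ⟨⟨⟨hrange, h0, hsum⟩, hs2⟩, hflt⟩
      have hchar := (s2_char hm1).mp hs2
      refine ⟨⟨fun x hx => ?_, hsum⟩, hchar.1⟩
      rw [Finset.mem_Icc]
      have hxn : x ≤ n := by rw [← hsum]; exact mem_le_sum hx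
      have hxm : ¬ (x < m) := by
        intro hlt
        have : x ∈ S.filter (· < m) := Finset.mem_filter.mpr ⟨hx, hlt⟩
        rw [Finset.card_eq_zero] at hflt
        rw [hflt] at this
        exact absurd this (Finset.notMem_empty x)
      omega
    · rintro ⟨⟨hsub, hsum⟩, hcard⟩
      have hbound : ∀ x ∈ S, m ≤ x ∧ x ≤ n := by
        intro x hx
        have := hsub hx
        rw [Finset.mem_Icc] at this
        exact this
      have hflt : S.filter (· < m) = ∅ := by
        apply Finset.filter_eq_empty_iff.mpr
        intro x hx
        have := hbound x hx
        omega
      refine ⟨⟨⟨fun x hx => ?_, fun h0 => ?_, hsum⟩, ?_⟩, by rw [hflt]; simp⟩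
      · rw [Finset.mem_range]
        have := hbound x hx
        omega
      · have := hbound 0 h0
        omega
      · exact (s2_char hm1).mpr ⟨hcard, by rw [hflt]; simp⟩
  have hGA : (gg m n : ℤ)
      = (∑ S ∈ ((Finset.Icc m n).powerset.filter (fun S => S.sum id = n)).filter
          (fun S => 2 ≤ S.card), (-1:ℤ) ^ S.card) + (-1) := by
    rw [gg, ← Finset.sum_filter_add_sum_filter_not
      ((Finset.Icc m n).powerset.filter (fun S => S.sum id = n)) (fun S => 2 ≤ S.card)]
    congr 1
    have hsingle : ((Finset.Icc m n).powerset.filter (fun S => S.sum id = n)).filter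
        (fun S => ¬ 2 ≤ S.card) = {({n} : Finset ℕ)} := by
      ext S
      simp only [Finset.mem_filter, Finset.mem_powerset, Finset.mem_singleton]
      constructor
      · rintro ⟨⟨hsub, hsum⟩, hcard⟩
        interval_cases h : S.card
        · rw [Finset.card_eq_zero] at h
          subst h
          simp at hsum
          omega
        · rw [Finset.card_eq_one] at h
          obtain ⟨a, rfl⟩ := h
          simp only [Finset.sum_singleton, id] at hsum
          rw [hsum]
      · rintro rfl
        refine ⟨⟨?_, by simp⟩, by simp⟩
        intro x hx
        rw [Finset.mem_singleton] at hx
        subst hx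
        rw [Finset.mem_Icc]
        omega
    rw [hsingle, Finset.sum_singleton, Finset.card_singleton]
    ring
  -- now part B
  have hB : (((Fn n).filter (fun S => m ≤ s2 S)).filter
      (fun S => ¬ (S.filter (· < m)).card = 0))
      = (Finset.Icc 1 (m-1)).biUnion (fun a =>
          ((Finset.Icc m (n-a)).powerset.filter (fun T => T.sum id = n - a)).image
            (insert a)) := by
    ext S
    simp only [Finset.mem_filter, Finset.mem_biUnion, Finset.mem_image,
      Finset.mem_powerset, mem_Fn, Finset.mem_Icc]
    constructor
    · rintro ⟨⟨⟨hrange, h0, hsum⟩, hs2⟩, hflt⟩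
      have hchar := (s2_char hm1).mp hs2
      have hone : (S.filter (· < m)).card = 1 := by omega
      rw [Finset.card_eq_one] at hone
      obtain ⟨a, ha⟩ := hone
      have haS : a ∈ S ∧ a < m := by
        have : a ∈ S.filter (· < m) := by rw [ha]; simp
        exact ⟨(Finset.mem_filter.mp this).1, (Finset.mem_filter.mp this).2⟩
      have ha1 : 1 ≤ a := by
        rcases Nat.eq_zero_or_pos a with rfl | h
        · exact absurd haS.1 h0
        · exact h
      refine ⟨a, ⟨ha1, by omega⟩, S.erase a, ⟨?_, ?_⟩, Finset.insert_erase haS.1⟩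
      · intro x hx
        have hxS : x ∈ S := Finset.mem_of_mem_erase hx
        have hxa : x ≠ a := Finset.ne_of_mem_erase hx
        have hxm : m ≤ x := by
          by_contra hlt
          have : x ∈ S.filter (· < m) := Finset.mem_filter.mpr ⟨hxS, by omega⟩
          rw [ha, Finset.mem_singleton] at this
          exact hxa this
        have hsum' : a + (S.erase a).sum id = S.sum id := Finset.add_sum_erase S id haS.1
        have hxle : x ≤ (S.erase a).sum id := mem_le_sum hx
        rw [Finset.mem_Icc]
        omega
      · have hsum' : a + (S.erase a).sum id = S.sum id := Finset.add_sum_erase S id haS.1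
        omega
    · rintro ⟨a, ⟨ha1, ham⟩, T, ⟨hTsub, hTsum⟩, rfl⟩
      have hTbound : ∀ x ∈ T, m ≤ x ∧ x ≤ n - a := by
        intro x hx
        have := hTsub hx
        rwa [Finset.mem_Icc] at this
      have haT : a ∉ T := by
        intro h
        have := hTbound a h
        omega
      have hTne : T.Nonempty := by
        rcases Finset.eq_empty_or_nonempty T with rfl | h
        · simp at hTsum
          omega
        · exact h
      have hsum : (insert a T).sum id = n := by
        rw [Finset.sum_insert haT, hTsum]
        show a + (n - a) = n
        omega
      have hfilter : (insert a T).filter (· < m) = {a} :=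
        insert_filter_small (show a < m by omega) hTsub
      have hcard2 : 2 ≤ (insert a T).card := by
        rw [Finset.card_insert_of_notMem haT]
        have := Finset.card_pos.mpr hTne
        omega
      refine ⟨⟨⟨?_, ?_, hsum⟩, ?_⟩, ?_⟩
      · intro x hx
        rw [Finset.mem_insert] at hx
        rw [Finset.mem_range]
        rcases hx with rfl | hx
        · omega
        · have := hTbound x hx
          omega
      · intro h0
        rw [Finset.mem_insert] at h0
        rcases h0 with h0 | h0
        · omega
        · have := hTbound 0 h0
          omega
      · exact (s2_char hm1).mpr ⟨hcard2, by rw [hfilter]; simp⟩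
      · rw [hfilter]
        simp
  have hdisj : (↑(Finset.Icc 1 (m-1)) : Set ℕ).PairwiseDisjoint (fun a =>
      ((Finset.Icc m (n-a)).powerset.filter (fun T => T.sum id = n - a)).image
        (insert a)) := by
    intro a ha b hb hab
    simp only [Function.onFun]
    rw [Finset.disjoint_left]
    intro S hSa hSb
    rw [Finset.mem_image] at hSa hSb
    obtain ⟨T1, hT1, rfl⟩ := hSa
    obtain ⟨T2, hT2, hins⟩ := hSb
    rw [Finset.mem_filter, Finset.mem_powerset] at hT1 hT2
    have h1 : (insert a T1).filter (· < m) = {a} := insert_filter_small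
      (by rw [Finset.mem_coe, Finset.mem_Icc] at ha; omega) hT1.1
    have h2 : (insert b T2).filter (· < m) = {b} := insert_filter_small
      (by rw [Finset.mem_coe, Finset.mem_Icc] at hb; omega) hT2.1
    rw [hins] at h2
    rw [h1] at h2
    exact hab (Finset.singleton_injective h2)
  rw [hA, hB, Finset.sum_biUnion hdisj]
  have hImage : ∀ a ∈ Finset.Icc 1 (m-1),
      (∑ S ∈ ((Finset.Icc m (n-a)).powerset.filter (fun T => T.sum id = n - a)).image
        (insert a), (-1:ℤ) ^ S.card) = - gg m (n - a) := by
    intro a ha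
    rw [Finset.mem_Icc] at ha
    have hinj : ∀ x ∈ (Finset.Icc m (n-a)).powerset.filter (fun T => T.sum id = n - a),
        ∀ y ∈ (Finset.Icc m (n-a)).powerset.filter (fun T => T.sum id = n - a),
        insert a x = insert a y → x = y := by
      intro x hx y hy hxy
      rw [Finset.mem_filter, Finset.mem_powerset] at hx hy
      have hax : a ∉ x := by
        intro h
        have := hx.1 h
        rw [Finset.mem_Icc] at this
        omega
      have hay : a ∉ y := by
        intro h
        have := hy.1 h
        rw [Finset.mem_Icc] at this
        omega
      rw [← Finset.erase_insert hax, ← Finset.erase_insert hay, hxy]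
    rw [Finset.sum_image hinj, gg, ← Finset.sum_neg_distrib]
    apply Finset.sum_congr rfl
    intro T hT
    rw [Finset.mem_filter, Finset.mem_powerset] at hT
    have haT : a ∉ T := by
      intro h
      have := hT.1 h
      rw [Finset.mem_Icc] at this
      omega
    rw [Finset.card_insert_of_notMem haT]
    ring
  rw [Finset.sum_congr rfl hImage, Finset.sum_neg_distrib]
  rw [hGA]
  ring

lemma gg_self_zero (s : ℕ) (hs : 1 ≤ s) : gg s 0 = 1 := by
  rw [gg]
  have h : Finset.Icc s 0 = ∅ := Finset.Icc_eq_empty (by omega)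
  rw [h]
  rw [show (∅ : Finset ℕ).powerset.filter (fun S => S.sum id = 0) = {∅} by
    ext S
    simp [Finset.powerset_empty]
    rintro rfl
    simp]
  simp

lemma sum_gg_full (N K : ℕ) (hN : 1 ≤ N) (hK : N ≤ K) :
    ∑ m ∈ Finset.Icc 1 K, gg m N = -(N.divisors.card : ℤ) := by
  have hsplit : Finset.Icc 1 K = Finset.Icc 1 N ∪ Finset.Icc (N+1) K := by
    ext x
    simp only [Finset.mem_Icc, Finset.mem_union]
    omega
  have hdisj : Disjoint (Finset.Icc 1 N) (Finset.Icc (N+1) K) := by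
    rw [Finset.disjoint_left]
    intro x hx hx'
    rw [Finset.mem_Icc] at hx hx'
    omega
  rw [hsplit, Finset.sum_union hdisj, A_core N hN]
  have hzero : ∑ m ∈ Finset.Icc (N+1) K, gg m N = 0 := by
    apply Finset.sum_eq_zero
    intro m hm
    rw [Finset.mem_Icc] at hm
    exact gg_zero_of_lt (by omega) hN
  rw [hzero]
  ring

lemma C_core_partial (s : ℕ) (hs : 2 ≤ s) :
    ∑ m ∈ Finset.Icc 1 (s-1), gg m (s - m) = -1 := by
  have h1 : Finset.Icc 1 s = insert s (Finset.Icc 1 (s-1)) := by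
    ext x
    simp only [Finset.mem_Icc, Finset.mem_insert]
    omega
  have h2 := C_core s hs
  rw [h1, Finset.sum_insert (by rw [Finset.mem_Icc]; omega)] at h2
  rw [Nat.sub_self] at h2
  rw [gg_self_zero s (by omega)] at h2
  linarith

lemma FFW2_sum (n : ℕ) (hn : 1 ≤ n) :
    FFW 2 n = ∑ m ∈ Finset.Icc 1 n,
      ∑ S ∈ (Fn n).filter (fun S => m ≤ s2 S), (-1:ℤ) ^ S.card := by
  rw [FFW_two_eq]
  have h1 : ∀ S ∈ Fn n, (-1:ℤ) ^ S.card * (s2 S : ℤ)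
      = ∑ m ∈ Finset.Icc 1 n, (if m ≤ s2 S then (-1:ℤ) ^ S.card else 0) := by
    intro S hS
    rw [s2_indicator hS, Finset.mul_sum]
    apply Finset.sum_congr rfl
    intro m _
    by_cases h : m ≤ s2 S <;> simp [h]
  rw [Finset.sum_congr rfl h1, Finset.sum_comm]
  apply Finset.sum_congr rfl
  intro m _
  rw [Finset.sum_filter]

lemma Q_eq (n : ℕ) (hn : 1 ≤ n) :
    ∑ m ∈ Finset.Icc 1 n, ∑ a ∈ Finset.Icc 1 (m-1), gg m (n - a)
      = ∑ a ∈ Finset.Icc 1 (n-1), ∑ m ∈ Finset.Icc (a+1) n, gg m (n - a) := by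
  rw [Finset.sum_sigma', Finset.sum_sigma']
  apply Finset.sum_nbij' (i := fun p => (⟨p.2, p.1⟩ : (_ : ℕ) × ℕ))
    (j := fun p => (⟨p.2, p.1⟩ : (_ : ℕ) × ℕ))
  · rintro ⟨m, a⟩ hp
    simp only [Finset.mem_sigma, Finset.mem_Icc] at hp ⊢
    omega
  · rintro ⟨a, m⟩ hp
    simp only [Finset.mem_sigma, Finset.mem_Icc] at hp ⊢
    omega
  · rintro ⟨m, a⟩ _
    rfl
  · rintro ⟨a, m⟩ _
    rfl
  · rintro ⟨m, a⟩ _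
    rfl

lemma R_eq (n : ℕ) (hn : 1 ≤ n) :
    ∑ a ∈ Finset.Icc 1 (n-1), ∑ m ∈ Finset.Icc 1 a, gg m (n - a)
      = -(n - 1 : ℤ) := by
  have h : ∑ a ∈ Finset.Icc 1 (n-1), ∑ m ∈ Finset.Icc 1 a, gg m (n - a)
      = ∑ s ∈ Finset.Icc 2 n, ∑ m ∈ Finset.Icc 1 (s-1), gg m (s - m) := by
    rw [Finset.sum_sigma', Finset.sum_sigma']
    apply Finset.sum_nbij' (i := fun p => (⟨n - p.1 + p.2, p.2⟩ : (_ : ℕ) × ℕ))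
      (j := fun p => (⟨n - p.1 + p.2, p.2⟩ : (_ : ℕ) × ℕ))
    · rintro ⟨a, m⟩ hp
      simp only [Finset.mem_sigma, Finset.mem_Icc] at hp ⊢
      omega
    · rintro ⟨s, m⟩ hp
      simp only [Finset.mem_sigma, Finset.mem_Icc] at hp ⊢
      omega
    · rintro ⟨a, m⟩ hp
      simp only [Finset.mem_sigma, Finset.mem_Icc] at hp
      have : n - (n - a + m) + m = a := by omega
      simp [this]
    · rintro ⟨s, m⟩ hp
      simp only [Finset.mem_sigma, Finset.mem_Icc] at hp
      have : n - (n - s + m) + m = s := by omega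
      simp [this]
    · rintro ⟨a, m⟩ hp
      simp only [Finset.mem_sigma, Finset.mem_Icc] at hp
      show gg m (n - a) = gg m (n - a + m - m)
      have h2 : n - a + m - m = n - a := by omega
      rw [h2]
  rw [h]
  have hinner : ∀ s ∈ Finset.Icc 2 n, ∑ m ∈ Finset.Icc 1 (s-1), gg m (s - m) = -1 := by
    intro s hs
    rw [Finset.mem_Icc] at hs
    exact C_core_partial s hs.1
  rw [Finset.sum_congr rfl hinner, Finset.sum_const, Nat.card_Icc]
  have : n + 1 - 2 = n - 1 := by omega
  rw [this, nsmul_eq_mul, Nat.cast_sub hn]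
  push_cast
  ring

end

theorem stmt1 (n : ℕ) (hn : 1 ≤ n) :
    FFW 2 n = (∑ j ∈ Finset.Icc 1 (n - 1), (j.divisors.card : ℤ)) - (n.divisors.card : ℤ) + 1 := by
  rw [FFW2_sum n hn]
  have hE : ∀ m ∈ Finset.Icc 1 n, (∑ S ∈ (Fn n).filter (fun S => m ≤ s2 S), (-1:ℤ)^S.card)
      = gg m n + 1 - ∑ a ∈ Finset.Icc 1 (m-1), gg m (n - a) := by
    intro m hm
    rw [Finset.mem_Icc] at hm
    exact E_eq n m hm.1 hm.2 hn
  rw [Finset.sum_congr rfl hE, Finset.sum_sub_distrib, Finset.sum_add_distrib,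
    A_core n hn, Finset.sum_const, Nat.card_Icc, Q_eq n hn]
  have hsplit : ∀ a ∈ Finset.Icc 1 (n-1),
      ∑ m ∈ Finset.Icc (a+1) n, gg m (n-a)
        = -(((n-a).divisors.card : ℤ)) - ∑ m ∈ Finset.Icc 1 a, gg m (n-a) := by
    intro a ha
    rw [Finset.mem_Icc] at ha
    have h1 : Finset.Icc 1 n = Finset.Icc 1 a ∪ Finset.Icc (a+1) n := by
      ext x
      simp only [Finset.mem_Icc, Finset.mem_union]
      omega
    have hdisj : Disjoint (Finset.Icc 1 a) (Finset.Icc (a+1) n) := by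
      rw [Finset.disjoint_left]
      intro x hx hx'
      rw [Finset.mem_Icc] at hx hx'
      omega
    have hfull := sum_gg_full (n-a) n (by omega) (by omega)
    rw [h1, Finset.sum_union hdisj] at hfull
    linarith
  rw [Finset.sum_congr rfl hsplit, Finset.sum_sub_distrib, R_eq n hn,
    Finset.sum_neg_distrib]
  have hreflect : ∑ a ∈ Finset.Icc 1 (n-1), (((n-a).divisors.card : ℕ) : ℤ)
      = ∑ j ∈ Finset.Icc 1 (n-1), ((j.divisors.card : ℕ) : ℤ) := by
    apply Finset.sum_nbij' (i := fun a => n - a) (j := fun a => n - a)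
    · intro a ha
      rw [Finset.mem_Icc] at ha ⊢
      omega
    · intro a ha
      rw [Finset.mem_Icc] at ha ⊢
      omega
    · intro a ha
      rw [Finset.mem_Icc] at ha
      omega
    · intro a ha
      rw [Finset.mem_Icc] at ha
      omega
    · intro a ha
      rfl
  rw [hreflect, nsmul_eq_mul, mul_one, Nat.cast_sub (by omega : 1 ≤ n + 1)]
  push_cast
  ring

end PaperFFW
end

section
/- Let k ≥ 1 be an integer and let q ∈ ℂ with |q| < 1. Then Σ_{n=1}^∞ n q^{kn}/(q;q)_n = (1/(q^k;q)_∞) · Σ_{n=k}^∞ d_{≥k}(n) q^n, where both series converge absolutely. -/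
open Finset Filter Topology

namespace PaperFFW

section Aux
variable {q : ℂ}

lemma norm_one_sub_pow_lb (q : ℂ) (a : ℕ) : 1 - ‖q‖ ^ a ≤ ‖1 - q ^ a‖ := by
  calc 1 - ‖q‖ ^ a = ‖(1:ℂ)‖ - ‖q ^ a‖ := by rw [norm_one, norm_pow]
  _ ≤ ‖1 - q ^ a‖ := norm_sub_norm_le _ _

lemma pow_norm_le (hq : ‖q‖ < 1) {a : ℕ} (ha : 1 ≤ a) : ‖q‖ ^ a ≤ ‖q‖ :=
  pow_le_of_le_one (norm_nonneg q) hq.le (by omega)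

lemma one_sub_pow_pos (hq : ‖q‖ < 1) {a : ℕ} (ha : 1 ≤ a) : 0 < 1 - ‖q‖ ^ a := by
  have := pow_norm_le hq ha; linarith

lemma one_sub_qpow_ne (hq : ‖q‖ < 1) {a : ℕ} (ha : 1 ≤ a) : (1 : ℂ) - q ^ a ≠ 0 := by
  intro h
  have h1 := norm_one_sub_pow_lb q a
  rw [h, norm_zero] at h1
  have := one_sub_pow_pos hq ha
  linarith

lemma norm_one_sub_qpow_ge (hq : ‖q‖ < 1) {a : ℕ} (ha : 1 ≤ a) : 1 - ‖q‖ ≤ ‖1 - q ^ a‖ := by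
  have h1 := norm_one_sub_pow_lb q a
  have := pow_norm_le hq ha
  linarith

/-- Uniform positive lower bound for the partial Pochhammer products. -/
noncomputable def lbc (q : ℂ) : ℝ := Real.exp (-(‖q‖ / ((1 - ‖q‖) * (1 - ‖q‖))))

lemma lbc_pos (q : ℂ) : 0 < lbc q := Real.exp_pos _

lemma exp_le_one_sub (hq : ‖q‖ < 1) {x : ℝ} (h0 : 0 ≤ x) (hx : x ≤ ‖q‖) :
    Real.exp (-(x / (1 - ‖q‖))) ≤ 1 - x := by
  have h1 : x < 1 := lt_of_le_of_lt hx hq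
  have h2 : (0:ℝ) < 1 - x := by linarith
  have h3 : (0:ℝ) < 1 - ‖q‖ := by linarith
  have key : 1 / (1 - x) ≤ Real.exp (x / (1 - ‖q‖)) := by
    have hd : x / (1 - x) ≤ x / (1 - ‖q‖) := by
      apply div_le_div_of_nonneg_left h0 h3; linarith
    have he := Real.add_one_le_exp (x / (1 - ‖q‖))
    have : 1 / (1 - x) = 1 + x / (1 - x) := by field_simp; ring
    linarith
  rw [Real.exp_neg]
  have hepos := Real.exp_pos (x / (1 - ‖q‖))
  rw [inv_le_comm₀ hepos h2, ← one_div]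
  exact key

lemma geom_tail_le (hq : ‖q‖ < 1) (m n : ℕ) (hm : 1 ≤ m) :
    ∑ i ∈ range n, ‖q‖ ^ (m + i) ≤ ‖q‖ / (1 - ‖q‖) := by
  have h3 : (0:ℝ) < 1 - ‖q‖ := by linarith
  have h4 : ∑ i ∈ range n, ‖q‖ ^ i ≤ 1 / (1 - ‖q‖) := by
    rcases eq_or_ne ‖q‖ 1 with h | h
    · linarith [hq, h.ge]
    · rw [geom_sum_eq h]
      have h5 : (‖q‖ ^ n - 1) / (‖q‖ - 1) = (1 - ‖q‖ ^ n) / (1 - ‖q‖) := by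
        rw [div_eq_div_iff (by intro hc; apply h; linarith [sub_eq_zero.mp hc]) h3.ne']
        ring
      rw [h5]
      gcongr
      nlinarith [pow_nonneg (norm_nonneg q) n]
  have h6 : ∑ i ∈ range n, ‖q‖ ^ (m + i) = ‖q‖ ^ m * ∑ i ∈ range n, ‖q‖ ^ i := by
    rw [Finset.mul_sum]; exact Finset.sum_congr rfl fun i _ => pow_add ‖q‖ m i
  rw [h6]
  calc ‖q‖ ^ m * ∑ i ∈ range n, ‖q‖ ^ i ≤ ‖q‖ * (1 / (1 - ‖q‖)) := by
        apply mul_le_mul (pow_norm_le hq hm) h4 (Finset.sum_nonneg fun i _ => pow_nonneg (norm_nonneg q) i) (norm_nonneg q)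
  _ = ‖q‖ / (1 - ‖q‖) := by ring

lemma prod_lb (hq : ‖q‖ < 1) (m n : ℕ) (hm : 1 ≤ m) :
    lbc q ≤ ∏ i ∈ range n, (1 - ‖q‖ ^ (m + i)) := by
  have h3 : (0:ℝ) < 1 - ‖q‖ := by linarith
  calc lbc q ≤ Real.exp (∑ i ∈ range n, -(‖q‖ ^ (m + i) / (1 - ‖q‖))) := by
        apply Real.exp_le_exp.2
        rw [Finset.sum_neg_distrib, ← Finset.sum_div, neg_le_neg_iff, ← div_div]
        gcongr
        exact geom_tail_le hq m n hm
  _ = ∏ i ∈ range n, Real.exp (-(‖q‖ ^ (m + i) / (1 - ‖q‖))) := Real.exp_sum _ _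
  _ ≤ ∏ i ∈ range n, (1 - ‖q‖ ^ (m + i)) := by
        apply Finset.prod_le_prod (fun i _ => (Real.exp_pos _).le)
        intro i _
        exact exp_le_one_sub hq (pow_nonneg (norm_nonneg q) _) (pow_norm_le hq (by omega))

lemma qPoch_eq (q : ℂ) (n : ℕ) : qPoch q q n = ∏ i ∈ range n, (1 - q ^ (1 + i)) := by
  unfold qPoch
  exact Finset.prod_congr rfl fun i _ => by rw [← pow_succ', Nat.add_comm 1 i, pow_succ']

lemma qPoch_succ (q : ℂ) (n : ℕ) : qPoch q q (n + 1) = qPoch q q n * (1 - q ^ (n + 1)) := by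
  rw [qPoch_eq, qPoch_eq, Finset.prod_range_succ, Nat.add_comm 1 n]

lemma qPoch_lb (hq : ‖q‖ < 1) (n : ℕ) : lbc q ≤ ‖qPoch q q n‖ := by
  rw [qPoch_eq]
  calc lbc q ≤ ∏ i ∈ range n, (1 - ‖q‖ ^ (1 + i)) := prod_lb hq 1 n le_rfl
  _ ≤ ∏ i ∈ range n, ‖1 - q ^ (1 + i)‖ := by
      apply Finset.prod_le_prod
      · intro i _; exact (one_sub_pow_pos hq (by omega)).le
      · intro i _; exact norm_one_sub_pow_lb q (1 + i)
  _ = ‖∏ i ∈ range n, (1 - q ^ (1 + i))‖ := (norm_prod _ _).symm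

lemma qPoch_ne (hq : ‖q‖ < 1) (n : ℕ) : qPoch q q n ≠ 0 := by
  intro h
  have h1 := qPoch_lb hq n
  rw [h, norm_zero] at h1
  exact absurd h1 (not_le.2 (lbc_pos q))

lemma norm_term_le (hq : ‖q‖ < 1) (a n : ℕ) :
    ‖q ^ a / qPoch q q n‖ ≤ (lbc q)⁻¹ * ‖q‖ ^ a := by
  rw [norm_div, norm_pow]
  calc ‖q‖ ^ a / ‖qPoch q q n‖ ≤ ‖q‖ ^ a / lbc q := by
        gcongr
        · exact lbc_pos q
        · exact qPoch_lb hq n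
  _ = (lbc q)⁻¹ * ‖q‖ ^ a := div_eq_inv_mul _ _

lemma pow_mul_le_pow (hq : ‖q‖ < 1) {m : ℕ} (hm : 1 ≤ m) (n : ℕ) : ‖q‖ ^ (m * n) ≤ ‖q‖ ^ n :=
  pow_le_pow_of_le_one (norm_nonneg q) hq.le (Nat.le_mul_of_pos_left n hm)

lemma summable_Fq (hq : ‖q‖ < 1) {m : ℕ} (hm : 1 ≤ m) :
    Summable (fun n : ℕ => q ^ (m * n) / qPoch q q n) := by
  refine Summable.of_norm_bounded (g := fun n => (lbc q)⁻¹ * ‖q‖ ^ n) (Summable.mul_left _ (summable_geometric_of_lt_one (norm_nonneg q) hq)) fun n => ?_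
  refine (norm_term_le hq (m * n) n).trans ?_
  show _ ≤ (lbc q)⁻¹ * ‖q‖ ^ n
  exact mul_le_mul_of_nonneg_left (pow_mul_le_pow hq hm n) (inv_nonneg.2 (lbc_pos q).le)

lemma summable_Sq (hq : ‖q‖ < 1) {m : ℕ} (hm : 1 ≤ m) :
    Summable (fun n : ℕ => (n : ℂ) * q ^ (m * n) / qPoch q q n) := by
  have hs : Summable (fun n : ℕ => (lbc q)⁻¹ * ((n : ℝ) * ‖q‖ ^ n)) := by
    apply Summable.mul_left
    have := summable_pow_mul_geometric_of_norm_lt_one (R := ℝ) 1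
      (r := ‖q‖) (by rwa [Real.norm_eq_abs, abs_of_nonneg (norm_nonneg q)])
    simpa using this
  refine Summable.of_norm_bounded hs fun n => ?_
  rw [mul_div_assoc, norm_mul, Complex.norm_natCast, mul_comm ((lbc q)⁻¹), mul_assoc]
  apply mul_le_mul_of_nonneg_left _ (Nat.cast_nonneg n)
  refine (norm_term_le hq (m * n) n).trans ?_
  rw [mul_comm (‖q‖ ^ n)]
  exact mul_le_mul_of_nonneg_left (pow_mul_le_pow hq hm n) (inv_nonneg.2 (lbc_pos q).le)

lemma summable_Tq (hq : ‖q‖ < 1) {m : ℕ} (hm : 1 ≤ m) :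
    Summable (fun j : ℕ => q ^ (m + j) / (1 - q ^ (m + j))) := by
  have h3 : (0:ℝ) < 1 - ‖q‖ := by linarith
  have hs : Summable (fun j : ℕ => ((1 - ‖q‖)⁻¹ * ‖q‖ ^ m) * ‖q‖ ^ j) :=
    Summable.mul_left _ (summable_geometric_of_lt_one (norm_nonneg q) hq)
  refine Summable.of_norm_bounded hs fun j => ?_
  rw [norm_div, norm_pow]
  calc ‖q‖ ^ (m + j) / ‖1 - q ^ (m + j)‖ ≤ ‖q‖ ^ (m + j) / (1 - ‖q‖) := by
        gcongr
        exact norm_one_sub_qpow_ge hq (by omega)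
  _ = (1 - ‖q‖)⁻¹ * ‖q‖ ^ m * ‖q‖ ^ j := by rw [pow_add]; ring

noncomputable def Fq (q : ℂ) (m : ℕ) : ℂ := ∑' n : ℕ, q ^ (m * n) / qPoch q q n
noncomputable def Sq (q : ℂ) (m : ℕ) : ℂ := ∑' n : ℕ, (n : ℂ) * q ^ (m * n) / qPoch q q n
noncomputable def Tq (q : ℂ) (m : ℕ) : ℂ := ∑' j : ℕ, q ^ (m + j) / (1 - q ^ (m + j))

lemma exp_split1 (q : ℂ) (m n : ℕ) : q ^ ((m+1)*(n+1)) = q ^ (m*(n+1)) * q ^ (n+1) := by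
  rw [← pow_add]; congr 1; ring

lemma exp_split2 (q : ℂ) (m n : ℕ) : q ^ (m*(n+1)) = q ^ m * q ^ (m*n) := by
  rw [← pow_add]; congr 1; ring

lemma term_cancel (hq : ‖q‖ < 1) (m n : ℕ) :
    (q ^ (m*(n+1)) - q ^ ((m+1)*(n+1))) / qPoch q q (n+1)
      = q ^ m * (q ^ (m*n) / qPoch q q n) := by
  have h1 : (1:ℂ) - q ^ (n+1) ≠ 0 := one_sub_qpow_ne hq (by omega)
  have h2 := qPoch_ne hq n
  rw [qPoch_succ]
  calc (q ^ (m*(n+1)) - q ^ ((m+1)*(n+1))) / (qPoch q q n * (1 - q ^ (n+1)))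
      = (q ^ (m*(n+1)) * (1 - q ^ (n+1))) / (qPoch q q n * (1 - q ^ (n+1))) := by
        congr 1; rw [exp_split1]; ring
  _ = q ^ (m*(n+1)) / qPoch q q n := by
        rw [mul_div_mul_right _ _ h1]
  _ = q ^ m * (q ^ (m*n) / qPoch q q n) := by rw [exp_split2, mul_div_assoc]

lemma Fq_rec (hq : ‖q‖ < 1) {m : ℕ} (hm : 1 ≤ m) :
    Fq q m - Fq q (m + 1) = q ^ m * Fq q m := by
  have hF := summable_Fq hq hm
  have hF1 := summable_Fq (m := m + 1) hq (by omega)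
  have hd : Summable (fun n : ℕ => (q ^ (m*n) - q ^ ((m+1)*n)) / qPoch q q n) :=
    (hF.sub hF1).congr fun n => by rw [div_sub_div_same]
  have h0 : Fq q m - Fq q (m+1) = ∑' n : ℕ, (q ^ (m*n) - q ^ ((m+1)*n)) / qPoch q q n := by
    rw [Fq, Fq, ← Summable.tsum_sub hF hF1]
    exact tsum_congr fun n => by rw [div_sub_div_same]
  rw [h0, Summable.tsum_eq_zero_add hd]
  have hz : (q ^ (m*0) - q ^ ((m+1)*0)) / qPoch q q 0 = 0 := by simp
  rw [hz, zero_add]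
  rw [tsum_congr (fun n => term_cancel hq m n), tsum_mul_left]
  rfl

lemma Fq_succ (hq : ‖q‖ < 1) {m : ℕ} (hm : 1 ≤ m) :
    Fq q (m + 1) = (1 - q ^ m) * Fq q m := by
  have h := Fq_rec hq hm; linear_combination -h

lemma Sq_rec (hq : ‖q‖ < 1) {m : ℕ} (hm : 1 ≤ m) :
    Sq q m - Sq q (m + 1) = q ^ m * Sq q m + q ^ m * Fq q m := by
  have hS := summable_Sq hq hm
  have hS1 := summable_Sq (m := m + 1) hq (by omega)
  have hF := summable_Fq hq hm
  have hd : Summable (fun n : ℕ => (n : ℂ) * (q ^ (m*n) - q ^ ((m+1)*n)) / qPoch q q n) :=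
    (hS.sub hS1).congr fun n => by rw [div_sub_div_same, ← mul_sub]
  have h0 : Sq q m - Sq q (m+1)
      = ∑' n : ℕ, (n : ℂ) * (q ^ (m*n) - q ^ ((m+1)*n)) / qPoch q q n := by
    rw [Sq, Sq, ← Summable.tsum_sub hS hS1]
    exact tsum_congr fun n => by rw [div_sub_div_same, ← mul_sub]
  rw [h0, Summable.tsum_eq_zero_add hd]
  have hz : (0 : ℂ) * (q ^ (m*0) - q ^ ((m+1)*0)) / qPoch q q 0 = 0 := by simp
  rw [Nat.cast_zero, hz, zero_add]
  have hterm : ∀ n : ℕ, ((n : ℂ) + 1) * (q ^ (m*(n+1)) - q ^ ((m+1)*(n+1))) / qPoch q q (n+1)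
      = q ^ m * ((n : ℂ) * q ^ (m*n) / qPoch q q n) + q ^ m * (q ^ (m*n) / qPoch q q n) := by
    intro n
    rw [mul_div_assoc, term_cancel hq m n]
    ring
  calc ∑' n : ℕ, ((n + 1 : ℕ) : ℂ) * (q ^ (m*(n+1)) - q ^ ((m+1)*(n+1))) / qPoch q q (n+1)
      = ∑' n : ℕ, (q ^ m * ((n : ℂ) * q ^ (m*n) / qPoch q q n) + q ^ m * (q ^ (m*n) / qPoch q q n)) := by
        apply tsum_congr
        intro n
        push_cast
        exact hterm n
  _ = q ^ m * Sq q m + q ^ m * Fq q m := by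
        rw [Summable.tsum_add (hS.mul_left _) (hF.mul_left _), tsum_mul_left, tsum_mul_left]
        rfl

lemma Sq_succ (hq : ‖q‖ < 1) {m : ℕ} (hm : 1 ≤ m) :
    Sq q (m + 1) = (1 - q ^ m) * Sq q m - q ^ m * Fq q m := by
  have h := Sq_rec hq hm; linear_combination -h

lemma Tq_rec (hq : ‖q‖ < 1) {m : ℕ} (hm : 1 ≤ m) :
    Tq q m = q ^ m / (1 - q ^ m) + Tq q (m + 1) := by
  rw [Tq, Summable.tsum_eq_zero_add (summable_Tq hq hm), Tq]
  congr 1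
  exact tsum_congr fun j => by rw [show m + (j+1) = (m+1)+j by ring]

noncomputable def logC (q : ℂ) : ℝ := (1 - ‖q‖)⁻¹ / 2 + 1

noncomputable def Lq (q : ℂ) (m : ℕ) : ℂ := ∑' j : ℕ, Complex.log (1 - q ^ (m + j))

lemma norm_log_le (hq : ‖q‖ < 1) {a : ℕ} (ha : 1 ≤ a) :
    ‖Complex.log (1 - q ^ a)‖ ≤ logC q * ‖q‖ ^ a := by
  have h3 : (0:ℝ) < 1 - ‖q‖ := by linarith
  have hz : ‖-q ^ a‖ < 1 := by
    rw [norm_neg, norm_pow]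
    calc ‖q‖ ^ a ≤ ‖q‖ := pow_norm_le hq ha
    _ < 1 := hq
  have h := Complex.norm_log_one_add_le hz
  rw [show (1 : ℂ) + -q ^ a = 1 - q ^ a by ring] at h
  rw [norm_neg, norm_pow] at h
  refine h.trans ?_
  have h1 : ‖q‖ ^ a ≤ 1 := (pow_norm_le hq ha).trans hq.le
  have h2 : (1 - ‖q‖ ^ a)⁻¹ ≤ (1 - ‖q‖)⁻¹ := by
    apply inv_anti₀ h3
    have := pow_norm_le hq ha; linarith
  have h4 : (0:ℝ) ≤ ‖q‖ ^ a := pow_nonneg (norm_nonneg q) a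
  have h6 : ‖q‖ ^ a * (1 - ‖q‖ ^ a)⁻¹ ≤ (1 - ‖q‖)⁻¹ := by
    calc ‖q‖ ^ a * (1 - ‖q‖ ^ a)⁻¹ ≤ 1 * (1 - ‖q‖)⁻¹ :=
          mul_le_mul h1 h2 (inv_nonneg.2 (one_sub_pow_pos hq ha).le) (by norm_num)
    _ = (1 - ‖q‖)⁻¹ := one_mul _
  have h5 : (‖q‖ ^ a) ^ 2 * (1 - ‖q‖ ^ a)⁻¹ / 2 ≤ ‖q‖ ^ a * ((1 - ‖q‖)⁻¹ / 2) := by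
    have h7 := mul_le_mul_of_nonneg_left h6 h4
    nlinarith
  rw [logC]; nlinarith

lemma summable_log (hq : ‖q‖ < 1) {m : ℕ} (hm : 1 ≤ m) :
    Summable (fun j : ℕ => Complex.log (1 - q ^ (m + j))) := by
  have hs : Summable (fun j : ℕ => (logC q * ‖q‖ ^ m) * ‖q‖ ^ j) :=
    Summable.mul_left _ (summable_geometric_of_lt_one (norm_nonneg q) hq)
  refine Summable.of_norm_bounded hs fun j => ?_
  refine (norm_log_le hq (by omega)).trans ?_
  rw [pow_add, mul_assoc]

lemma Pq_exp (hq : ‖q‖ < 1) {m : ℕ} (hm : 1 ≤ m) :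
    qPochInf (q ^ m) q = Complex.exp (Lq q m) := by
  have h1 : qPochInf (q ^ m) q = ∏' j : ℕ, (1 - q ^ (m + j)) := by
    rw [qPochInf]
    exact tprod_congr fun j => by rw [pow_add]
  have h2 := Complex.cexp_tsum_eq_tprod (f := fun j : ℕ => 1 - q ^ (m + j))
    (fun j => one_sub_qpow_ne hq (by omega))
    (summable_log hq hm)
  rw [h1, Lq]
  exact h2.symm

lemma Pq_ne (hq : ‖q‖ < 1) {m : ℕ} (hm : 1 ≤ m) : qPochInf (q ^ m) q ≠ 0 := by
  rw [Pq_exp hq hm]; exact Complex.exp_ne_zero _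

lemma multipliable_P (hq : ‖q‖ < 1) {m : ℕ} (hm : 1 ≤ m) :
    Multipliable (fun j : ℕ => 1 - q ^ (m + j)) :=
  Complex.multipliable_of_summable_log (summable_log hq hm)

lemma Pq_rec (hq : ‖q‖ < 1) {m : ℕ} (hm : 1 ≤ m) :
    qPochInf (q ^ m) q = (1 - q ^ m) * qPochInf (q ^ (m + 1)) q := by
  have h1 : qPochInf (q ^ m) q = ∏' j : ℕ, (1 - q ^ (m + j)) := by
    rw [qPochInf]; exact tprod_congr fun j => by rw [pow_add]
  have h2 : qPochInf (q ^ (m + 1)) q = ∏' j : ℕ, (1 - q ^ (m + (j + 1))) := by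
    rw [qPochInf]
    exact tprod_congr fun j => by rw [← pow_add, show m + 1 + j = m + (j + 1) by omega]
  have hm1 : Multipliable (fun j : ℕ => 1 - q ^ (m + (j + 1))) :=
    (multipliable_P (m := m + 1) hq (by omega)).congr fun j => by
      rw [show m + 1 + j = m + (j + 1) by omega]
  have key := tprod_eq_zero_mul' (f := fun j : ℕ => 1 - q ^ (m + j)) hm1
  rw [h1, h2, key]
  norm_num

lemma norm_Lq_le (hq : ‖q‖ < 1) {m : ℕ} (hm : 1 ≤ m) :
    ‖Lq q m‖ ≤ (logC q * (1 - ‖q‖)⁻¹) * ‖q‖ ^ m := by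
  have hgs : HasSum (fun j : ℕ => (logC q * ‖q‖ ^ m) * ‖q‖ ^ j)
      ((logC q * ‖q‖ ^ m) * (1 - ‖q‖)⁻¹) :=
    (hasSum_geometric_of_lt_one (norm_nonneg q) hq).mul_left _
  have := tsum_of_norm_bounded hgs fun j => by
    refine (norm_log_le hq (show 1 ≤ m + j by omega)).trans ?_
    rw [pow_add, mul_assoc]
  rw [Lq]
  refine this.trans (le_of_eq ?_)
  ring

/-- generic geometric-decay tendsto helper -/
lemma tendsto_of_geom_bound {f : ℕ → ℂ} {L : ℂ} {C : ℝ} (hq : ‖q‖ < 1) (k : ℕ)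
    (h : ∀ n : ℕ, ‖f n - L‖ ≤ C * ‖q‖ ^ (k + n)) :
    Tendsto f atTop (𝓝 L) := by
  rw [← tendsto_sub_nhds_zero_iff]
  refine squeeze_zero_norm (a := fun n => (C * ‖q‖ ^ k) * ‖q‖ ^ n)
    (fun n => (h n).trans (le_of_eq (by rw [pow_add]; ring))) ?_
  have := tendsto_pow_atTop_nhds_zero_of_lt_one (norm_nonneg q) hq
  have h2 := this.const_mul (C * ‖q‖ ^ k)
  simpa using h2

lemma Fq_bound (hq : ‖q‖ < 1) {m : ℕ} (hm : 1 ≤ m) :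
    ‖Fq q m - 1‖ ≤ ((lbc q)⁻¹ * (1 - ‖q‖)⁻¹) * ‖q‖ ^ m := by
  have hF := summable_Fq hq hm
  have h0 : Fq q m = 1 + ∑' n : ℕ, q ^ (m * (n + 1)) / qPoch q q (n + 1) := by
    rw [Fq, Summable.tsum_eq_zero_add hF]
    congr 1
    simp [qPoch]
  rw [h0, add_sub_cancel_left]
  have hgs : HasSum (fun n : ℕ => ((lbc q)⁻¹ * ‖q‖ ^ m) * ‖q‖ ^ n)
      (((lbc q)⁻¹ * ‖q‖ ^ m) * (1 - ‖q‖)⁻¹) :=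
    (hasSum_geometric_of_lt_one (norm_nonneg q) hq).mul_left _
  refine (tsum_of_norm_bounded hgs fun n => ?_).trans (le_of_eq (by ring))
  refine (norm_term_le hq (m * (n + 1)) (n + 1)).trans ?_
  rw [mul_assoc, ← pow_add]
  apply mul_le_mul_of_nonneg_left _ (inv_nonneg.2 (lbc_pos q).le)
  exact pow_le_pow_of_le_one (norm_nonneg q) hq.le (by nlinarith [Nat.le_mul_of_pos_left n hm])

lemma Sq_bound (hq : ‖q‖ < 1) {m : ℕ} (hm : 1 ≤ m) :
    ‖Sq q m‖ ≤ ((lbc q)⁻¹ * (∑' n : ℕ, (n : ℝ) * ‖q‖ ^ (n - 1))) * ‖q‖ ^ m := by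
  have hsum : Summable (fun n : ℕ => (n : ℝ) * ‖q‖ ^ (n - 1)) := by
    rw [← summable_nat_add_iff 1]
    have := summable_pow_mul_geometric_of_norm_lt_one (R := ℝ) 1
      (r := ‖q‖) (by rwa [Real.norm_eq_abs, abs_of_nonneg (norm_nonneg q)])
    apply (this.add (summable_geometric_of_lt_one (norm_nonneg q) hq)).congr
    intro n
    push_cast [Nat.add_sub_cancel]
    ring
  have hgs : HasSum (fun n : ℕ => ((lbc q)⁻¹ * ‖q‖ ^ m) * ((n : ℝ) * ‖q‖ ^ (n - 1)))
      (((lbc q)⁻¹ * ‖q‖ ^ m) * (∑' n : ℕ, (n : ℝ) * ‖q‖ ^ (n - 1))) :=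
    hsum.hasSum.mul_left _
  rw [Sq]
  refine (tsum_of_norm_bounded hgs fun n => ?_).trans (le_of_eq (by ring))
  rw [mul_div_assoc, norm_mul, Complex.norm_natCast]
  rcases Nat.eq_zero_or_pos n with rfl | hn
  · simp
  · have h1 : ‖q ^ (m * n) / qPoch q q n‖ ≤ (lbc q)⁻¹ * (‖q‖ ^ m * ‖q‖ ^ (n - 1)) := by
      refine (norm_term_le hq (m * n) n).trans ?_
      rw [← pow_add]
      apply mul_le_mul_of_nonneg_left _ (inv_nonneg.2 (lbc_pos q).le)
      apply pow_le_pow_of_le_one (norm_nonneg q) hq.le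
      obtain ⟨t, rfl⟩ : ∃ t, n = t + 1 := ⟨n - 1, by omega⟩
      simp only [Nat.add_sub_cancel]
      nlinarith [Nat.le_mul_of_pos_left t hm]
    calc (n : ℝ) * ‖q ^ (m * n) / qPoch q q n‖
        ≤ (n : ℝ) * ((lbc q)⁻¹ * (‖q‖ ^ m * ‖q‖ ^ (n - 1))) :=
          mul_le_mul_of_nonneg_left h1 (Nat.cast_nonneg n)
    _ = (lbc q)⁻¹ * ‖q‖ ^ m * ((n : ℝ) * ‖q‖ ^ (n - 1)) := by ring
  
lemma Tq_bound (hq : ‖q‖ < 1) {m : ℕ} (hm : 1 ≤ m) :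
    ‖Tq q m‖ ≤ ((1 - ‖q‖)⁻¹ * (1 - ‖q‖)⁻¹) * ‖q‖ ^ m := by
  have h3 : (0:ℝ) < 1 - ‖q‖ := by linarith
  have hgs : HasSum (fun j : ℕ => ((1 - ‖q‖)⁻¹ * ‖q‖ ^ m) * ‖q‖ ^ j)
      (((1 - ‖q‖)⁻¹ * ‖q‖ ^ m) * (1 - ‖q‖)⁻¹) :=
    (hasSum_geometric_of_lt_one (norm_nonneg q) hq).mul_left _
  rw [Tq]
  refine (tsum_of_norm_bounded hgs fun j => ?_).trans (le_of_eq (by ring))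
  rw [norm_div, norm_pow]
  calc ‖q‖ ^ (m + j) / ‖1 - q ^ (m + j)‖ ≤ ‖q‖ ^ (m + j) / (1 - ‖q‖) := by
        gcongr
        exact norm_one_sub_qpow_ge hq (by omega)
  _ = (1 - ‖q‖)⁻¹ * ‖q‖ ^ m * ‖q‖ ^ j := by rw [pow_add]; ring

lemma tendsto_Fq (hq : ‖q‖ < 1) (k : ℕ) (hk : 1 ≤ k) :
    Tendsto (fun n : ℕ => Fq q (k + n)) atTop (𝓝 1) :=
  tendsto_of_geom_bound hq k fun n => Fq_bound hq (by omega)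

lemma tendsto_Sq (hq : ‖q‖ < 1) (k : ℕ) (hk : 1 ≤ k) :
    Tendsto (fun n : ℕ => Sq q (k + n)) atTop (𝓝 0) :=
  tendsto_of_geom_bound hq k fun n => by
    rw [sub_zero]; exact Sq_bound hq (by omega)

lemma tendsto_Tq (hq : ‖q‖ < 1) (k : ℕ) (hk : 1 ≤ k) :
    Tendsto (fun n : ℕ => Tq q (k + n)) atTop (𝓝 0) :=
  tendsto_of_geom_bound hq k fun n => by
    rw [sub_zero]; exact Tq_bound hq (by omega)

lemma tendsto_Pq (hq : ‖q‖ < 1) (k : ℕ) (hk : 1 ≤ k) :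
    Tendsto (fun n : ℕ => qPochInf (q ^ (k + n)) q) atTop (𝓝 1) := by
  have hL : Tendsto (fun n : ℕ => Lq q (k + n)) atTop (𝓝 0) :=
    tendsto_of_geom_bound hq k fun n => by
      rw [sub_zero]; exact norm_Lq_le hq (by omega)
  have : Tendsto (fun n : ℕ => Complex.exp (Lq q (k + n))) atTop (𝓝 (Complex.exp 0)) :=
    (Complex.continuous_exp.tendsto 0).comp hL
  rw [Complex.exp_zero] at this
  apply this.congr
  intro n
  rw [Pq_exp hq (by omega)]

lemma Euler_FP (hq : ‖q‖ < 1) {k : ℕ} (hk : 1 ≤ k) :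
    Fq q k * qPochInf (q ^ k) q = 1 := by
  have step : ∀ m : ℕ, 1 ≤ m →
      Fq q m * qPochInf (q ^ m) q = Fq q (m + 1) * qPochInf (q ^ (m + 1)) q := by
    intro m hm
    rw [Fq_succ hq hm, Pq_rec hq hm]
    ring
  have const : ∀ n : ℕ, Fq q k * qPochInf (q ^ k) q
      = Fq q (k + n) * qPochInf (q ^ (k + n)) q := by
    intro n
    induction n with
    | zero => rfl
    | succ n ih => rw [ih, step (k + n) (by omega)]; rfl
  have lim : Tendsto (fun n : ℕ => Fq q (k + n) * qPochInf (q ^ (k + n)) q) atTop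
      (𝓝 (1 * 1)) := (tendsto_Fq hq k hk).mul (tendsto_Pq hq k hk)
  have lim2 : Tendsto (fun n : ℕ => Fq q (k + n) * qPochInf (q ^ (k + n)) q) atTop
      (𝓝 (Fq q k * qPochInf (q ^ k) q)) := by
    apply Tendsto.congr (fun n => const n) tendsto_const_nhds
  have := tendsto_nhds_unique lim2 lim
  rwa [one_mul] at this

lemma prod_lb_c (hq : ‖q‖ < 1) (m n : ℕ) (hm : 1 ≤ m) :
    lbc q ≤ ‖∏ i ∈ range n, (1 - q ^ (m + i))‖ := by
  calc lbc q ≤ ∏ i ∈ range n, (1 - ‖q‖ ^ (m + i)) := prod_lb hq m n hm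
  _ ≤ ∏ i ∈ range n, ‖1 - q ^ (m + i)‖ := by
      apply Finset.prod_le_prod
      · intro i _; exact (one_sub_pow_pos hq (by omega)).le
      · intro i _; exact norm_one_sub_pow_lb q (m + i)
  _ = ‖∏ i ∈ range n, (1 - q ^ (m + i))‖ := (norm_prod _ _).symm

lemma S_eq_FT (hq : ‖q‖ < 1) {k : ℕ} (hk : 1 ≤ k) :
    Sq q k = Fq q k * Tq q k := by
  set D : ℕ → ℂ := fun m => Sq q m - Fq q m * Tq q m with hD
  have step : ∀ m : ℕ, 1 ≤ m → D (m + 1) = (1 - q ^ m) * D m := by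
    intro m hm
    have hne := one_sub_qpow_ne hq hm
    have hTm1 : Tq q (m + 1) = Tq q m - q ^ m / (1 - q ^ m) := by
      have := Tq_rec hq hm; linear_combination -this
    have hcancel : (1 - q ^ m) * (q ^ m / (1 - q ^ m)) = q ^ m := by
      field_simp
    simp only [hD]
    rw [Sq_succ hq hm, Fq_succ hq hm, hTm1]
    linear_combination Fq q m * hcancel
  have iter : ∀ n : ℕ, D (k + n) = (∏ i ∈ range n, (1 - q ^ (k + i))) * D k := by
    intro n
    induction n with
    | zero => simp
    | succ n ih =>
      rw [show k + (n + 1) = (k + n) + 1 by ring, step (k + n) (by omega), ih,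
        Finset.prod_range_succ]
      ring
  have hDlim : Tendsto (fun n : ℕ => D (k + n)) atTop (𝓝 0) := by
    have h1 := (tendsto_Fq hq k hk).mul (tendsto_Tq hq k hk)
    rw [mul_zero] at h1
    have := (tendsto_Sq hq k hk).sub h1
    rwa [sub_zero] at this
  have hnormlim : Tendsto (fun n : ℕ => ‖D (k + n)‖) atTop (𝓝 0) := by
    have := hDlim.norm; rwa [norm_zero] at this
  have hlb : ∀ n : ℕ, lbc q * ‖D k‖ ≤ ‖D (k + n)‖ := by
    intro n
    rw [iter n, norm_mul]
    apply mul_le_mul_of_nonneg_right (prod_lb_c hq k n hk) (norm_nonneg _)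
  have hle : lbc q * ‖D k‖ ≤ 0 := ge_of_tendsto' hnormlim hlb
  have h0 : ‖D k‖ = 0 := by
    have h1 := norm_nonneg (D k)
    have h2 := lbc_pos q
    nlinarith
  have : D k = 0 := norm_eq_zero.mp h0
  simp only [hD] at this
  linear_combination this

lemma dGE_le (k n : ℕ) : dGE k n ≤ n + 1 := by
  calc dGE k n ≤ n.divisors.card := Finset.card_filter_le _ _
  _ ≤ (Finset.range (n + 1)).card := by
      apply Finset.card_le_card
      intro d hd
      obtain ⟨hdvd, hne⟩ := Nat.mem_divisors.mp hd
      exact Finset.mem_range.mpr (Nat.lt_succ_of_le (Nat.le_of_dvd (Nat.pos_of_ne_zero hne) hdvd))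
  _ = n + 1 := Finset.card_range _

lemma summable_dGE (hq : ‖q‖ < 1) {k : ℕ} (hk : 1 ≤ k) :
    Summable (fun m : ℕ => ((dGE k (m + k) : ℕ) : ℂ) * q ^ (m + k)) := by
  have hA : Summable (fun m : ℕ => ((m : ℝ) + 1) * ‖q‖ ^ m) := by
    have h1 := summable_pow_mul_geometric_of_norm_lt_one (R := ℝ) 1
      (r := ‖q‖) (by rwa [Real.norm_eq_abs, abs_of_nonneg (norm_nonneg q)])
    apply (h1.add (summable_geometric_of_lt_one (norm_nonneg q) hq)).congr
    intro n; push_cast; ring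
  refine Summable.of_norm_bounded
    (g := fun m => (((k : ℝ) + 1) * ‖q‖ ^ k) * (((m : ℝ) + 1) * ‖q‖ ^ m)) (hA.mul_left _) fun m => ?_
  rw [norm_mul, norm_pow, Complex.norm_natCast]
  have hb : (dGE k (m + k) : ℝ) ≤ ((k : ℝ) + 1) * ((m : ℝ) + 1) := by
    have h1 := dGE_le k (m + k)
    have h2 : ((dGE k (m + k) : ℝ)) ≤ ((m + k + 1 : ℕ) : ℝ) := by exact_mod_cast h1
    refine h2.trans ?_
    push_cast
    nlinarith [Nat.cast_nonneg (α := ℝ) m, Nat.cast_nonneg (α := ℝ) k]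
  calc (dGE k (m + k) : ℝ) * ‖q‖ ^ (m + k)
      ≤ (((k : ℝ) + 1) * ((m : ℝ) + 1)) * ‖q‖ ^ (m + k) := by
        apply mul_le_mul_of_nonneg_right hb (pow_nonneg (norm_nonneg q) _)
  _ = (((k : ℝ) + 1) * ‖q‖ ^ k) * (((m : ℝ) + 1) * ‖q‖ ^ m) := by rw [pow_add]; ring

lemma summable_pairs (hq : ‖q‖ < 1) {k : ℕ} (hk : 1 ≤ k) :
    Summable (fun p : ℕ × ℕ => q ^ ((k + p.1) * (p.2 + 1))) := by
  have hgeom : Summable (fun j : ℕ => ‖q‖ ^ j) := summable_geometric_of_lt_one (norm_nonneg q) hq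
  have hg2 : Summable (fun p : ℕ × ℕ => ‖q‖ ^ p.1 * ‖q‖ ^ p.2) :=
    Summable.mul_of_nonneg hgeom hgeom
      (fun j => pow_nonneg (norm_nonneg q) j) (fun t => pow_nonneg (norm_nonneg q) t)
  refine Summable.of_norm_bounded (g := fun p : ℕ × ℕ => ‖q‖ ^ k * (‖q‖ ^ p.1 * ‖q‖ ^ p.2))
    (hg2.mul_left _) fun p => ?_
  show _ ≤ ‖q‖ ^ k * (‖q‖ ^ p.1 * ‖q‖ ^ p.2)
  rw [norm_pow, ← pow_add, ← pow_add]
  apply pow_le_pow_of_le_one (norm_nonneg q) hq.le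
  nlinarith [p.1.zero_le, p.2.zero_le, Nat.le_mul_of_pos_left p.2 (show 0 < k + p.1 by omega)]

lemma inner_geom (hq : ‖q‖ < 1) {k : ℕ} (hk : 1 ≤ k) (j : ℕ) :
    HasSum (fun t : ℕ => q ^ ((k + j) * (t + 1))) (q ^ (k + j) / (1 - q ^ (k + j))) := by
  have hn : ‖q ^ (k + j)‖ < 1 := by
    rw [norm_pow]
    exact lt_of_le_of_lt (pow_norm_le hq (by omega)) hq
  have h := (hasSum_geometric_of_norm_lt_one hn).mul_left (q ^ (k + j))
  rw [← div_eq_mul_inv] at h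
  have he : (fun t : ℕ => q ^ (k + j) * (q ^ (k + j)) ^ t) = fun t : ℕ => q ^ ((k + j) * (t + 1)) :=
    funext fun t => by rw [pow_mul, pow_succ, mul_comm ((q ^ (k+j)) ^ t)]
  rwa [he] at h

lemma Tq_eq_double (hq : ‖q‖ < 1) {k : ℕ} (hk : 1 ≤ k) :
    Tq q k = ∑' p : ℕ × ℕ, q ^ ((k + p.1) * (p.2 + 1)) := by
  calc Tq q k = ∑' j : ℕ, ∑' t : ℕ, q ^ ((k + j) * (t + 1)) := by
        rw [Tq]
        exact tsum_congr fun j => ((inner_geom hq hk j).tsum_eq).symm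
  _ = ∑' p : ℕ × ℕ, q ^ ((k + p.1) * (p.2 + 1)) :=
        (Summable.tsum_prod' (summable_pairs hq hk) fun j => (inner_geom hq hk j).summable).symm

lemma k_le_prod {k j t : ℕ} (hk : 1 ≤ k) : k ≤ (k + j) * (t + 1) :=
  le_trans (Nat.le_add_right k j) (Nat.le_mul_of_pos_right _ (by omega))

/-- The bijection between pairs `(j,t)` and pairs (`m`, divisor `d ≥ k` of `m + k`). -/
def divEquiv (k : ℕ) (hk : 1 ≤ k) :
    (ℕ × ℕ) ≃ Σ m : ℕ, {d : ℕ // d ∈ (m + k).divisors.filter (fun d => k ≤ d)} where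
  toFun p := ⟨(k + p.1) * (p.2 + 1) - k, ⟨k + p.1, by
    rw [Finset.mem_filter, Nat.mem_divisors]
    have hle : k ≤ (k + p.1) * (p.2 + 1) := k_le_prod hk
    refine ⟨⟨⟨p.2 + 1, by rw [Nat.sub_add_cancel hle]⟩, by positivity⟩, by omega⟩⟩⟩
  invFun σ := (σ.2.1 - k, (σ.1 + k) / σ.2.1 - 1)
  left_inv p := by
    obtain ⟨j, t⟩ := p
    have hle : k ≤ (k + j) * (t + 1) := k_le_prod hk
    have hpos : 0 < k + j := by omega
    simp only []
    rw [Nat.sub_add_cancel hle, Nat.mul_div_cancel_left _ hpos]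
    simp
  right_inv σ := by
    obtain ⟨m, d, hd⟩ := σ
    rw [Finset.mem_filter, Nat.mem_divisors] at hd
    obtain ⟨⟨hdvd, hne⟩, hkd⟩ := hd
    have hdpos : 0 < d := by omega
    have hdle : d ≤ m + k := Nat.le_of_dvd (Nat.pos_of_ne_zero hne) hdvd
    have hdiv1 : 1 ≤ (m + k) / d := (Nat.one_le_div_iff hdpos).mpr hdle
    apply Sigma.subtype_ext
    · simp only []
      rw [show k + (d - k) = d from by omega, Nat.sub_add_cancel hdiv1,
        Nat.mul_div_cancel' hdvd]
      omega
    · simp only []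
      omega
  
lemma T_eq_dsum (hq : ‖q‖ < 1) {k : ℕ} (hk : 1 ≤ k) :
    ∑' m : ℕ, ((dGE k (m + k) : ℕ) : ℂ) * q ^ (m + k) = Tq q k := by
  set g : (Σ m : ℕ, {d : ℕ // d ∈ (m + k).divisors.filter (fun d => k ≤ d)}) → ℂ :=
    fun σ => q ^ (σ.1 + k) with hg
  have hge : ∀ p : ℕ × ℕ, g (divEquiv k hk p) = q ^ ((k + p.1) * (p.2 + 1)) := by
    intro p
    simp only [hg, divEquiv, Equiv.coe_fn_mk]
    rw [Nat.sub_add_cancel (k_le_prod hk)]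
  have hsg : Summable g := by
    rw [← (divEquiv k hk).summable_iff]
    exact (summable_pairs hq hk).congr fun p => (hge p).symm
  have h1 : Tq q k = ∑' σ, g σ := by
    rw [Tq_eq_double hq hk, ← (divEquiv k hk).tsum_eq g]
    exact (tsum_congr hge).symm
  rw [h1, Summable.tsum_sigma hsg]
  apply tsum_congr
  intro m
  have : ∑' (d : {d : ℕ // d ∈ (m + k).divisors.filter (fun d => k ≤ d)}), g ⟨m, d⟩
      = ((dGE k (m + k) : ℕ) : ℂ) * q ^ (m + k) := by
    rw [tsum_fintype]
    simp only [hg]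
    rw [Finset.sum_const, Finset.card_univ, Fintype.card_coe, nsmul_eq_mul]
    rfl
  rw [this]

end Aux

theorem stmt6 (k : ℕ) (hk : 1 ≤ k) (q : ℂ) (hq : ‖q‖ < 1) :
    Summable (fun n : ℕ => ((n + 1 : ℕ) : ℂ) * q ^ (k * (n + 1)) / qPoch q q (n + 1)) ∧
    Summable (fun m : ℕ => ((dGE k (m + k) : ℕ) : ℂ) * q ^ (m + k)) ∧
    ∑' n : ℕ, ((n + 1 : ℕ) : ℂ) * q ^ (k * (n + 1)) / qPoch q q (n + 1)
      = (1 / qPochInf (q ^ k) q) * ∑' m : ℕ, ((dGE k (m + k) : ℕ) : ℂ) * q ^ (m + k) := by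
  have hS := summable_Sq hq hk
  refine ⟨?_, summable_dGE hq hk, ?_⟩
  · exact (summable_nat_add_iff (f := fun n : ℕ => (n : ℂ) * q ^ (k * n) / qPoch q q n) 1).2 hS
  have h1 : (∑' n : ℕ, ((n + 1 : ℕ) : ℂ) * q ^ (k * (n + 1)) / qPoch q q (n + 1)) = Sq q k := by
    rw [Sq, Summable.tsum_eq_zero_add hS]
    simp
  have hPne := Pq_ne hq hk
  have hP := Euler_FP hq hk
  have h2 : Fq q k = 1 / qPochInf (q ^ k) q := by
    field_simp
    linear_combination hP
  rw [h1, S_eq_FT hq hk, T_eq_dsum hq hk, h2]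

end PaperFFW
end

section
/- Let n ≥ 1 be an integer. Then Σ_{π ∈ 𝒟₂(n)} (−1)^{#(π)} = 1 + (−1)^j if n = j(3j+1)/2 or n = j(3j−1)/2 for some positive integer j, and Σ_{π ∈ 𝒟₂(n)} (−1)^{#(π)} = 1 otherwise. -/
open Finset Filter

namespace PaperFFW

namespace Franklin

/-- Set of finsets of positive integers summing to `n`. -/
def Dn (n : ℕ) : Finset (Finset ℕ) :=
  (Finset.range (n+1)).powerset.filter (fun A => 0 ∉ A ∧ ∑ i ∈ A, i = n)

lemma mem_Dn {n : ℕ} {A : Finset ℕ} : A ∈ Dn n ↔ 0 ∉ A ∧ ∑ i ∈ A, i = n := by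
  simp only [Dn, mem_filter, mem_powerset, and_iff_right_iff_imp]
  rintro ⟨h0, hs⟩ a ha
  have : a ≤ ∑ i ∈ A, i := Finset.single_le_sum (fun i _ => Nat.zero_le i) ha
  simp [Finset.mem_range]; omega

def mA (A : Finset ℕ) : ℕ := A.sup id
noncomputable def sA (A : Finset ℕ) : ℕ := if h : A.Nonempty then A.min' h else 0
def rA (A : Finset ℕ) : ℕ :=
  Nat.findGreatest (fun t => Finset.Icc (mA A + 1 - t) (mA A) ⊆ A) (mA A)

lemma le_mA {A : Finset ℕ} {a : ℕ} (h : a ∈ A) : a ≤ mA A := Finset.le_sup (f := id) h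

lemma mA_mem {A : Finset ℕ} (h : A.Nonempty) : mA A ∈ A := by
  obtain ⟨b, hb⟩ := Finset.exists_mem_eq_sup A h id
  simpa [mA, hb.2] using hb.1

lemma sA_le {A : Finset ℕ} {a : ℕ} (h : a ∈ A) : sA A ≤ a := by
  rw [sA, dif_pos ⟨a, h⟩]; exact Finset.min'_le _ _ h

lemma sA_mem {A : Finset ℕ} (h : A.Nonempty) : sA A ∈ A := by
  rw [sA, dif_pos h]; exact Finset.min'_mem _ _

lemma one_le_mA {A : Finset ℕ} (h : A.Nonempty) (h0 : 0 ∉ A) : 1 ≤ mA A := by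
  have := mA_mem h
  rcases Nat.eq_zero_or_pos (mA A) with h' | h'
  · rw [h'] at this; exact absurd this h0
  · exact h'

lemma rA_le_mA {A : Finset ℕ} : rA A ≤ mA A := Nat.findGreatest_le _

lemma one_le_rA {A : Finset ℕ} (h : A.Nonempty) (h0 : 0 ∉ A) : 1 ≤ rA A := by
  apply Nat.le_findGreatest (one_le_mA h h0)
  intro x hx
  simp only [Finset.mem_Icc] at hx
  have : x = mA A := by omega
  rw [this]; exact mA_mem h

lemma rA_subset {A : Finset ℕ} (h : A.Nonempty) (h0 : 0 ∉ A) :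
    Finset.Icc (mA A + 1 - rA A) (mA A) ⊆ A := by
  apply Nat.findGreatest_spec (P := fun t => Finset.Icc (mA A + 1 - t) (mA A) ⊆ A)
    (one_le_rA h h0 |>.trans (Nat.le_refl _) |> fun _ => one_le_mA h h0)
  intro x hx
  simp only [Finset.mem_Icc] at hx
  have h1 := one_le_mA h h0
  have : x = mA A := by omega
  rw [this]; exact mA_mem h

lemma not_mem_mA_sub_rA {A : Finset ℕ} (h : A.Nonempty) (h0 : 0 ∉ A) :
    mA A - rA A ∉ A := by
  rcases Nat.lt_or_ge (rA A) (mA A) with hlt | hge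
  · intro hmem
    have hng := Nat.findGreatest_is_greatest
      (P := fun t => Finset.Icc (mA A + 1 - t) (mA A) ⊆ A)
      (n := mA A) (k := rA A + 1) (Nat.lt_succ_self _) (by omega)
    apply hng
    intro x hx
    simp only [Finset.mem_Icc] at hx
    rcases Nat.eq_or_lt_of_le hx.1 with heq | hlt'
    · rw [← heq]
      have : mA A + 1 - (rA A + 1) = mA A - rA A := by omega
      rw [this]; exact hmem
    · exact rA_subset h h0 (Finset.mem_Icc.2 ⟨by omega, hx.2⟩)
  · have : mA A - rA A = 0 := by omega
    rw [this]; exact h0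

/-- Determination of `rA` from a witness. -/
lemma rA_eq {A : Finset ℕ} {t : ℕ} (ht1 : 1 ≤ t) (ht2 : t ≤ mA A)
    (hsub : Finset.Icc (mA A + 1 - t) (mA A) ⊆ A) (hnot : mA A - t ∉ A) : rA A = t := by
  have hle : t ≤ rA A := Nat.le_findGreatest ht2 hsub
  rcases Nat.eq_or_lt_of_le hle with heq | hlt
  · omega
  · exfalso
    have hP : Finset.Icc (mA A + 1 - rA A) (mA A) ⊆ A :=
      Nat.findGreatest_spec (P := fun t => Finset.Icc (mA A + 1 - t) (mA A) ⊆ A) ht2 hsub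
    exact hnot (hP (Finset.mem_Icc.2 ⟨by omega, by omega⟩))

lemma mA_eq {A : Finset ℕ} {m : ℕ} (h1 : m ∈ A) (h2 : ∀ x ∈ A, x ≤ m) : mA A = m :=
  le_antisymm (Finset.sup_le h2) (le_mA h1)

lemma sA_eq {A : Finset ℕ} {s : ℕ} (h1 : s ∈ A) (h2 : ∀ x ∈ A, s ≤ x) : sA A = s :=
  le_antisymm (sA_le h1) (h2 _ (sA_mem ⟨s, h1⟩))


noncomputable def phi (A : Finset ℕ) : Finset ℕ :=
  if sA A ≤ rA A then
    ((A \ Finset.Icc (mA A + 1 - sA A) (mA A)).erase (sA A)) ∪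
      Finset.Icc (mA A + 2 - sA A) (mA A + 1)
  else
    (A \ Finset.Icc (mA A + 1 - rA A) (mA A)) ∪ Finset.Icc (mA A - rA A) (mA A - 1) ∪ {rA A}

lemma sum_Icc_shift (a b : ℕ) : ∑ i ∈ Finset.Icc (a+1) (b+1), i =
    (∑ i ∈ Finset.Icc a b, i) + (b + 1 - a) := by
  rcases le_or_gt a b with h | h
  · rw [← Finset.image_add_right_Icc a b 1,
      Finset.sum_image (by intro x _ y _ h; beta_reduce at h; omega)]
    rw [Finset.sum_add_distrib, Finset.sum_const, Nat.card_Icc, smul_eq_mul, mul_one]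
  · rw [Finset.Icc_eq_empty (by omega), Finset.Icc_eq_empty (by omega)]
    simp; omega

lemma step1 (A : Finset ℕ) (hne : A.Nonempty) (h0 : 0 ∉ A)
    (hsr : sA A ≤ rA A) (hm : 2 * sA A ≤ mA A) :
    0 ∉ phi A ∧ (∑ i ∈ phi A, i) = ∑ i ∈ A, i ∧ (phi A).card + 1 = A.card ∧
      phi (phi A) = A ∧ rA (phi A) = sA A ∧ mA (phi A) = mA A + 1 ∧
      ¬ sA (phi A) ≤ rA (phi A) := by
  set s := sA A with hs
  set m := mA A with hmdef
  set r := rA A with hr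
  have hsmem : s ∈ A := sA_mem hne
  have hmmem : m ∈ A := mA_mem hne
  have hs1 : 1 ≤ s := by
    rcases Nat.eq_zero_or_pos s with h | h
    · rw [h] at hsmem; exact absurd hsmem h0
    · omega
  have hsm : s ≤ m := sA_le hmmem
  have hr1 : 1 ≤ r := one_le_rA hne h0
  have hrm : r ≤ m := rA_le_mA
  have hIr : Finset.Icc (m + 1 - r) m ⊆ A := rA_subset hne h0
  have hIs : Finset.Icc (m + 1 - s) m ⊆ A := fun x hx => by
    apply hIr; simp only [Finset.mem_Icc] at hx ⊢; omega
  have hub : ∀ x ∈ A, x ≤ m := fun x hx => le_mA hx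
  have hlb : ∀ x ∈ A, s ≤ x := fun x hx => sA_le hx
  set C := A \ Finset.Icc (m + 1 - s) m with hC
  have hCmem : ∀ x, x ∈ C ↔ x ∈ A ∧ x ≤ m - s := by
    intro x
    simp only [hC, Finset.mem_sdiff, Finset.mem_Icc, not_and, not_le]
    constructor
    · rintro ⟨hxA, hx2⟩
      refine ⟨hxA, ?_⟩
      rcases le_or_gt (m + 1 - s) x with h | h
      · have := hub x hxA; omega
      · omega
    · rintro ⟨hxA, hx2⟩; exact ⟨hxA, by omega⟩
  have hsC : s ∈ C := (hCmem s).2 ⟨hsmem, by omega⟩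
  set B := C.erase s ∪ Finset.Icc (m + 2 - s) (m + 1) with hB
  have hphiA : phi A = B := by rw [phi, if_pos hsr]
  have hBmem : ∀ x, x ∈ B ↔ (x ∈ A ∧ x ≠ s ∧ x ≤ m - s) ∨ (m + 2 - s ≤ x ∧ x ≤ m + 1) := by
    intro x
    simp only [hB, Finset.mem_union, Finset.mem_erase, Finset.mem_Icc, hCmem]
    tauto
  have hdisj : Disjoint (C.erase s) (Finset.Icc (m + 2 - s) (m + 1)) := by
    rw [Finset.disjoint_left]
    intro x hx hx2
    rw [Finset.mem_erase, hCmem] at hx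
    rw [Finset.mem_Icc] at hx2
    omega
  have hdisj2 : Disjoint C (Finset.Icc (m + 2 - s) (m + 1)) := by
    rw [Finset.disjoint_left]
    intro x hx hx2
    rw [hCmem] at hx; rw [Finset.mem_Icc] at hx2; omega
  -- sums
  have hsumA : (∑ i ∈ C, i) + ∑ i ∈ Finset.Icc (m + 1 - s) m, i = ∑ i ∈ A, i :=
    Finset.sum_sdiff hIs
  have hsumC : (∑ i ∈ C.erase s, i) + s = ∑ i ∈ C, i := Finset.sum_erase_add _ _ hsC
  have hshift : ∑ i ∈ Finset.Icc (m + 2 - s) (m + 1), i =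
      (∑ i ∈ Finset.Icc (m + 1 - s) m, i) + s := by
    have h1 : m + 2 - s = (m + 1 - s) + 1 := by omega
    have h2 : m + 1 = m + 1 := rfl
    rw [h1, show m + 1 = m + 1 from rfl, sum_Icc_shift (m + 1 - s) m]
    congr 1; omega
  have hsumB : ∑ i ∈ B, i = ∑ i ∈ A, i := by
    rw [hB, Finset.sum_union hdisj, hshift]
    omega
  -- cards
  have hcardA : C.card + s = A.card := by
    have := Finset.card_sdiff_add_card_eq_card hIs
    rw [← hC] at this
    rw [← this, Nat.card_Icc]; congr 1; omega
  have hcardC : (C.erase s).card + 1 = C.card := by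
    rw [Finset.card_erase_of_mem hsC]
    have : 1 ≤ C.card := Finset.card_pos.2 ⟨s, hsC⟩
    omega
  have hcardB : B.card + 1 = A.card := by
    rw [hB, Finset.card_union_of_disjoint hdisj, Nat.card_Icc]
    have : m + 1 + 1 - (m + 2 - s) = s := by omega
    omega
  -- 0 ∉ B
  have h0B : 0 ∉ B := by
    rw [hBmem]
    push_neg
    refine ⟨fun h => absurd h h0, by omega⟩
  -- compute invariants of B
  have hBne : B.Nonempty := ⟨m + 1, (hBmem _).2 (Or.inr ⟨by omega, le_refl _⟩)⟩
  have hmB : mA B = m + 1 := by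
    apply mA_eq
    · rw [hBmem]; right; omega
    · intro x hx; rw [hBmem] at hx
      rcases hx with ⟨h1, _, _⟩ | ⟨_, h2⟩
      · have := hub x h1; omega
      · omega
  have hrB : rA B = s := by
    apply rA_eq hs1 (by omega)
    · intro x hx
      rw [Finset.mem_Icc, hmB] at hx
      rw [hBmem]; right; omega
    · rw [hmB, hBmem]
      push_neg
      constructor
      · rintro - -; omega
      · omega
  have hsB : ¬ sA B ≤ rA B := by
    rw [hrB]
    have hmemB : sA B ∈ B := sA_mem hBne
    rw [hBmem] at hmemB
    rcases hmemB with ⟨h1, h2, _⟩ | ⟨h2, _⟩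
    · have := hlb _ h1; omega
    · omega
  have hphiB : phi B = A := by
    rw [phi, if_neg hsB, hmB, hrB]
    have e1 : m + 1 + 1 - s = m + 2 - s := by omega
    have e2 : m + 1 - s = m + 1 - s := rfl
    have e3 : m + 1 - 1 = m := by omega
    rw [e1, e3]
    ext x
    simp only [Finset.mem_union, Finset.mem_sdiff, Finset.mem_Icc, Finset.mem_singleton, hBmem]
    constructor
    · rintro ((⟨⟨h1, _, _⟩ | ⟨h1, h2⟩, h3⟩ | ⟨h1, h2⟩) | rfl)
      · exact h1
      · omega
      · exact hIs (Finset.mem_Icc.2 ⟨h1, h2⟩)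
      · exact hsmem
    · intro hxA
      rcases eq_or_ne x s with rfl | hxs
      · right; rfl
      · rcases le_or_gt (m + 1 - s) x with h | h
        · left; right; exact ⟨h, hub x hxA⟩
        · left; left
          exact ⟨Or.inl ⟨hxA, hxs, by omega⟩, by omega⟩
  rw [hphiA]
  exact ⟨h0B, hsumB, hcardB, hphiB, hrB, hmB, hsB⟩

lemma step2 (A : Finset ℕ) (hne : A.Nonempty) (h0 : 0 ∉ A)
    (hsr : rA A < sA A) (hm : 2 * rA A + 1 ≤ mA A) :
    0 ∉ phi A ∧ (∑ i ∈ phi A, i) = ∑ i ∈ A, i ∧ (phi A).card = A.card + 1 ∧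
      phi (phi A) = A ∧ sA (phi A) = rA A ∧ mA (phi A) = mA A - 1 ∧
      sA (phi A) ≤ rA (phi A) := by
  set s := sA A with hs
  set m := mA A with hmdef
  set r := rA A with hr
  have hsmem : s ∈ A := sA_mem hne
  have hmmem : m ∈ A := mA_mem hne
  have hs1 : 1 ≤ s := by
    rcases Nat.eq_zero_or_pos s with h | h
    · rw [h] at hsmem; exact absurd hsmem h0
    · omega
  have hsm : s ≤ m := sA_le hmmem
  have hr1 : 1 ≤ r := one_le_rA hne h0
  have hrm : r ≤ m := rA_le_mA
  have hIr : Finset.Icc (m + 1 - r) m ⊆ A := rA_subset hne h0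
  have hmr : m - r ∉ A := not_mem_mA_sub_rA hne h0
  have hub : ∀ x ∈ A, x ≤ m := fun x hx => le_mA hx
  have hlb : ∀ x ∈ A, s ≤ x := fun x hx => sA_le hx
  set C := A \ Finset.Icc (m + 1 - r) m with hC
  have hCmem : ∀ x, x ∈ C ↔ x ∈ A ∧ x ≤ m - r - 1 := by
    intro x
    simp only [hC, Finset.mem_sdiff, Finset.mem_Icc, not_and, not_le]
    constructor
    · rintro ⟨hxA, hx2⟩
      refine ⟨hxA, ?_⟩
      have h1 := hub x hxA
      rcases le_or_gt (m + 1 - r) x with h | h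
      · omega
      · rcases Nat.eq_or_lt_of_le (show x ≤ m - r by omega) with heq | hlt
        · rw [heq] at hxA; exact absurd hxA hmr
        · omega
    · rintro ⟨hxA, hx2⟩; exact ⟨hxA, by omega⟩
  set B := C ∪ Finset.Icc (m - r) (m - 1) ∪ {r} with hB
  have hphiA : phi A = B := by rw [phi, if_neg (by omega)]
  have hBmem : ∀ x, x ∈ B ↔ (x ∈ A ∧ x ≤ m - r - 1) ∨ (m - r ≤ x ∧ x ≤ m - 1) ∨ x = r := by
    intro x
    simp only [hB, Finset.mem_union, Finset.mem_singleton, Finset.mem_Icc, hCmem]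
    tauto
  have hd1 : Disjoint C (Finset.Icc (m - r) (m - 1)) := by
    rw [Finset.disjoint_left]
    intro x hx hx2
    rw [hCmem] at hx; rw [Finset.mem_Icc] at hx2; omega
  have hd2 : Disjoint (C ∪ Finset.Icc (m - r) (m - 1)) ({r} : Finset ℕ) := by
    rw [Finset.disjoint_right]
    intro x hx hx2
    rw [Finset.mem_singleton] at hx
    subst hx
    rw [Finset.mem_union, hCmem, Finset.mem_Icc] at hx2
    rcases hx2 with ⟨h1, _⟩ | ⟨h1, _⟩
    · have := hlb _ h1; omega
    · omega
  have hsumA : (∑ i ∈ C, i) + ∑ i ∈ Finset.Icc (m + 1 - r) m, i = ∑ i ∈ A, i :=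
    Finset.sum_sdiff hIr
  have hshift : ∑ i ∈ Finset.Icc (m + 1 - r) m, i =
      (∑ i ∈ Finset.Icc (m - r) (m - 1), i) + r := by
    have key := sum_Icc_shift (m - r) (m - 1)
    rw [show m - r + 1 = m + 1 - r from by omega, show m - 1 + 1 = m from by omega,
      show m - (m - r) = r from by omega] at key
    exact key
  have hsumB : ∑ i ∈ B, i = ∑ i ∈ A, i := by
    rw [hB, Finset.sum_union hd2, Finset.sum_union hd1, Finset.sum_singleton]
    omega
  have hcardA : C.card + r = A.card := by
    have := Finset.card_sdiff_add_card_eq_card hIr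
    rw [← hC] at this
    rw [← this, Nat.card_Icc]; congr 1; omega
  have hcardB : B.card = A.card + 1 := by
    rw [hB, Finset.card_union_of_disjoint hd2, Finset.card_union_of_disjoint hd1,
      Finset.card_singleton, Nat.card_Icc]
    have : m - 1 + 1 - (m - r) = r := by omega
    omega
  have h0B : 0 ∉ B := by
    rw [hBmem]
    push_neg
    refine ⟨fun h => absurd h h0, by omega, by omega⟩
  have hBne : B.Nonempty := ⟨r, (hBmem _).2 (Or.inr (Or.inr rfl))⟩
  have hmB : mA B = m - 1 := by
    apply mA_eq
    · rw [hBmem]; right; left; omega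
    · intro x hx; rw [hBmem] at hx
      rcases hx with ⟨h1, h2⟩ | ⟨_, h2⟩ | rfl
      · omega
      · omega
      · omega
  have hsB : sA B = r := by
    apply sA_eq
    · rw [hBmem]; right; right; rfl
    · intro x hx; rw [hBmem] at hx
      rcases hx with ⟨h1, _⟩ | ⟨h1, _⟩ | rfl
      · have := hlb _ h1; omega
      · omega
      · exact le_refl r
  have hrB : r ≤ rA B := by
    apply Nat.le_findGreatest (by rw [hmB]; omega)
    intro x hx
    rw [hmB, Finset.mem_Icc] at hx
    rw [hBmem]; right; left; omega
  have hphiB : phi B = A := by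
    rw [phi, if_pos (by rw [hsB]; exact hrB), hsB, hmB]
    have e1 : m - 1 + 1 - r = m - r := by omega
    have e2 : m - 1 + 2 - r = m + 1 - r := by omega
    have e3 : m - 1 + 1 = m := by omega
    rw [e1, e2, e3]
    ext x
    simp only [Finset.mem_union, Finset.mem_erase, Finset.mem_sdiff, Finset.mem_Icc,
      hBmem]
    constructor
    · rintro (⟨hne', (⟨h1, _⟩ | ⟨h1, h2⟩ | rfl), h4⟩ | ⟨h1, h2⟩)
      · exact h1
      · omega
      · exact (hne' rfl).elim
      · exact hIr (Finset.mem_Icc.2 ⟨h1, h2⟩)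
    · intro hxA
      rcases le_or_gt (m + 1 - r) x with h | h
      · right; exact ⟨h, hub x hxA⟩
      · left
        have hx1 : x ≤ m - r - 1 := by
          rcases Nat.eq_or_lt_of_le (show x ≤ m - r by omega) with heq | hlt
          · rw [heq] at hxA; exact absurd hxA hmr
          · omega
        have hsx := hlb _ hxA
        exact ⟨by omega, Or.inl ⟨hxA, hx1⟩, by omega⟩
  rw [hphiA]
  exact ⟨h0B, hsumB, hcardB, hphiB, hsB, hmB, by rw [hsB]; exact hrB⟩

-- exceptional sets
lemma E1_stats (k : ℕ) (hk : 1 ≤ k) :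
    sA (Finset.Icc k (2*k-1)) = k ∧ mA (Finset.Icc k (2*k-1)) = 2*k-1 ∧
      rA (Finset.Icc k (2*k-1)) = k := by
  have hmem : ∀ x, x ∈ Finset.Icc k (2*k-1) ↔ k ≤ x ∧ x ≤ 2*k-1 := fun x => Finset.mem_Icc
  have hsA : sA (Finset.Icc k (2*k-1)) = k :=
    sA_eq ((hmem k).2 ⟨le_refl _, by omega⟩) (fun x hx => ((hmem x).1 hx).1)
  have hmA : mA (Finset.Icc k (2*k-1)) = 2*k-1 :=
    mA_eq ((hmem _).2 ⟨by omega, le_refl _⟩) (fun x hx => ((hmem x).1 hx).2)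
  refine ⟨hsA, hmA, ?_⟩
  apply rA_eq hk (by rw [hmA]; omega)
  · rw [hmA]; intro x hx; rw [Finset.mem_Icc] at hx ⊢; omega
  · rw [hmA, hmem]; omega

lemma E2_stats (k : ℕ) (hk : 1 ≤ k) :
    sA (Finset.Icc (k+1) (2*k)) = k+1 ∧ mA (Finset.Icc (k+1) (2*k)) = 2*k ∧
      rA (Finset.Icc (k+1) (2*k)) = k := by
  have hmem : ∀ x, x ∈ Finset.Icc (k+1) (2*k) ↔ k+1 ≤ x ∧ x ≤ 2*k := fun x => Finset.mem_Icc
  have hsA : sA (Finset.Icc (k+1) (2*k)) = k+1 :=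
    sA_eq ((hmem _).2 ⟨le_refl _, by omega⟩) (fun x hx => ((hmem x).1 hx).1)
  have hmA : mA (Finset.Icc (k+1) (2*k)) = 2*k :=
    mA_eq ((hmem _).2 ⟨by omega, le_refl _⟩) (fun x hx => ((hmem x).1 hx).2)
  refine ⟨hsA, hmA, ?_⟩
  apply rA_eq hk (by omega)
  · rw [hmA]; intro x hx; rw [Finset.mem_Icc] at hx ⊢; omega
  · rw [hmA, hmem]; omega

lemma dich1 (A : Finset ℕ) (hne : A.Nonempty) (h0 : 0 ∉ A)
    (hsr : sA A ≤ rA A) (h : ¬ 2 * sA A ≤ mA A) :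
    A = Finset.Icc (sA A) (2 * sA A - 1) := by
  set s := sA A with hsd
  set m := mA A with hmd
  set r := rA A with hrd
  have hsmem : s ∈ A := sA_mem hne
  have hmmem : m ∈ A := mA_mem hne
  have hs1 : 1 ≤ s := by
    rcases Nat.eq_zero_or_pos s with h' | h'
    · rw [h'] at hsmem; exact absurd hsmem h0
    · omega
  have hsm : s ≤ m := sA_le hmmem
  have hIr : Finset.Icc (m + 1 - r) m ⊆ A := rA_subset hne h0
  have hrm : r ≤ m := rA_le_mA
  have hAIcc : A = Finset.Icc s m := by
    apply Finset.Subset.antisymm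
    · intro x hx; rw [Finset.mem_Icc]; exact ⟨sA_le hx, le_mA hx⟩
    · intro x hx
      apply hIr
      rw [Finset.mem_Icc] at hx ⊢
      omega
  have hrval : r = m + 1 - s := by
    rw [hrd]
    apply rA_eq (A := A) (t := m + 1 - s) (by omega) (by omega)
    · rw [← hmd]
      intro x hx
      rw [Finset.mem_Icc] at hx
      rw [hAIcc, Finset.mem_Icc]; omega
    · rw [← hmd, hAIcc, Finset.mem_Icc]; omega
  have : m = 2 * s - 1 := by omega
  rw [hAIcc, this]

lemma dich2 (A : Finset ℕ) (hne : A.Nonempty) (h0 : 0 ∉ A)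
    (hsr : ¬ sA A ≤ rA A) (h : ¬ 2 * rA A + 1 ≤ mA A) :
    A = Finset.Icc (rA A + 1) (2 * rA A) := by
  set s := sA A
  set m := mA A
  set r := rA A
  have hsmem : s ∈ A := sA_mem hne
  have hmmem : m ∈ A := mA_mem hne
  have hs1 : 1 ≤ s := by
    rcases Nat.eq_zero_or_pos s with h' | h'
    · rw [h'] at hsmem; exact absurd hsmem h0
    · omega
  have hsm : s ≤ m := sA_le hmmem
  have hIr : Finset.Icc (m + 1 - r) m ⊆ A := rA_subset hne h0
  have hmr : m - r ∉ A := not_mem_mA_sub_rA hne h0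
  have hr1 : 1 ≤ r := one_le_rA hne h0
  have hrm : r ≤ m := rA_le_mA
  have hAIcc : A = Finset.Icc (m + 1 - r) m := by
    apply Finset.Subset.antisymm
    · intro x hx
      by_contra hc
      rw [Finset.mem_Icc] at hc
      push_neg at hc
      have h1 := le_mA hx
      have h2 := sA_le hx
      have h3 : x ≤ m - r := by omega
      rcases Nat.eq_or_lt_of_le h3 with heq | hlt
      · rw [heq] at hx; exact absurd hx hmr
      · omega
    · exact hIr
  have hsval : s = m + 1 - r := by
    apply sA_eq
    · rw [hAIcc, Finset.mem_Icc]; omega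
    · intro x hx; rw [hAIcc, Finset.mem_Icc] at hx; omega
  have hm2r : m = 2 * r := by omega
  rw [hAIcc, hm2r]
  congr 1
  omega

lemma A_nonempty {n : ℕ} (hn : 1 ≤ n) {A : Finset ℕ} (hA : A ∈ Dn n) : A.Nonempty := by
  rcases Finset.eq_empty_or_nonempty A with rfl | h
  · rw [mem_Dn] at hA
    simp at hA
    omega
  · exact h

lemma phi_good {n : ℕ} (hn : 1 ≤ n) {A : Finset ℕ} (hA : A ∈ Dn n)
    (hexc : ∀ k, 1 ≤ k → A ≠ Finset.Icc k (2*k-1) ∧ A ≠ Finset.Icc (k+1) (2*k)) :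
    phi A ∈ Dn n ∧ phi (phi A) = A ∧ (phi A).card % 2 ≠ A.card % 2 ∧
      (∀ k, 1 ≤ k → phi A ≠ Finset.Icc k (2*k-1) ∧ phi A ≠ Finset.Icc (k+1) (2*k)) := by
  rw [mem_Dn] at hA
  obtain ⟨h0, hsum⟩ := hA
  have hne : A.Nonempty := A_nonempty hn (mem_Dn.2 ⟨h0, hsum⟩)
  have hsmem := sA_mem hne
  have hs1 : 1 ≤ sA A := by
    rcases Nat.eq_zero_or_pos (sA A) with h' | h'
    · rw [h'] at hsmem; exact absurd hsmem h0
    · omega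
  have hr1 : 1 ≤ rA A := one_le_rA hne h0
  rcases le_or_gt (sA A) (rA A) with hsr | hsr
  · have hm : 2 * sA A ≤ mA A := by
      by_contra hc
      exact (hexc (sA A) hs1).1 (dich1 A hne h0 hsr hc)
    obtain ⟨h0B, hsumB, hcardB, hinv, hrB, hmB, hniB⟩ := step1 A hne h0 hsr hm
    refine ⟨mem_Dn.2 ⟨h0B, by rw [hsumB, hsum]⟩, hinv, by omega, ?_⟩
    intro k hk
    constructor
    · intro hBE
      obtain ⟨hsE, hmE, hrE⟩ := E1_stats k hk
      rw [hBE] at hniB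
      rw [hsE, hrE] at hniB
      omega
    · intro hBE
      obtain ⟨hsE, hmE, hrE⟩ := E2_stats k hk
      rw [hBE] at hrB hmB
      rw [hrE] at hrB
      rw [hmE] at hmB
      omega
  · have hm : 2 * rA A + 1 ≤ mA A := by
      by_contra hc
      exact (hexc (rA A) hr1).2 (dich2 A hne h0 (by omega) hc)
    obtain ⟨h0B, hsumB, hcardB, hinv, hsB, hmB, hposB⟩ := step2 A hne h0 hsr hm
    refine ⟨mem_Dn.2 ⟨h0B, by rw [hsumB, hsum]⟩, hinv, by omega, ?_⟩
    intro k hk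
    constructor
    · intro hBE
      obtain ⟨hsE, hmE, hrE⟩ := E1_stats k hk
      rw [hBE] at hsB hmB
      rw [hsE] at hsB
      rw [hmE] at hmB
      omega
    · intro hBE
      obtain ⟨hsE, hmE, hrE⟩ := E2_stats k hk
      rw [hBE] at hposB
      rw [hsE, hrE] at hposB
      omega


lemma neg_one_pow_cancel {a b : ℕ} (h : a % 2 ≠ b % 2) : (-1:ℤ)^a + (-1)^b = 0 := by
  rcases Nat.even_or_odd a with ha | ha <;> rcases Nat.even_or_odd b with hb | hb
  · have h1 := Nat.even_iff.1 ha; have h2 := Nat.even_iff.1 hb; omega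
  · rw [ha.neg_one_pow, hb.neg_one_pow]; ring
  · rw [ha.neg_one_pow, hb.neg_one_pow]; ring
  · have h1 := Nat.odd_iff.1 ha; have h2 := Nat.odd_iff.1 hb; omega

lemma E1_sum (k : ℕ) (hk : 1 ≤ k) :
    2 * (∑ i ∈ Finset.Icc k (2*k-1), i) = k * (3*k-1) ∧
      (Finset.Icc k (2*k-1)).card = k := by
  obtain ⟨j, rfl⟩ : ∃ j, k = j + 1 := ⟨k - 1, by omega⟩
  constructor
  · have hIcc : Finset.Icc (j+1) (2*(j+1)-1) = Finset.Ico (j+1) (2*j+2) := by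
      rw [← Finset.Ico_add_one_right_eq_Icc]
      congr 1 <;> omega
    rw [hIcc, show (j+1)*(3*(j+1)-1) = (j+1)*(3*j+2) from by congr 1]
    have h1 := Finset.sum_range_add_sum_Ico (fun i => i) (show j+1 ≤ 2*j+2 by omega)
    have h2 := Finset.sum_range_id_mul_two (2*j+2)
    have h3 := Finset.sum_range_id_mul_two (j+1)
    rw [show (2*j+2)*(2*j+2-1) = (2*j+2)*(2*j+1) from by congr 1] at h2
    rw [show (j+1)*(j+1-1) = (j+1)*j from by congr 1] at h3
    nlinarith [h1, h2, h3]
  · rw [Nat.card_Icc]; omega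

lemma E2_sum (k : ℕ) (hk : 1 ≤ k) :
    2 * (∑ i ∈ Finset.Icc (k+1) (2*k), i) = k * (3*k+1) ∧
      (Finset.Icc (k+1) (2*k)).card = k := by
  constructor
  · have hIcc : Finset.Icc (k+1) (2*k) = Finset.Ico (k+1) (2*k+1) := by
      rw [← Finset.Ico_add_one_right_eq_Icc]
    rw [hIcc]
    have h1 := Finset.sum_range_add_sum_Ico (fun i => i) (show k+1 ≤ 2*k+1 by omega)
    have h2 := Finset.sum_range_id_mul_two (2*k+1)
    have h3 := Finset.sum_range_id_mul_two (k+1)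
    rw [show (2*k+1)*(2*k+1-1) = (2*k+1)*(2*k) from by congr 1] at h2
    rw [show (k+1)*(k+1-1) = (k+1)*k from by congr 1] at h3
    nlinarith [h1, h2, h3]
  · rw [Nat.card_Icc]; omega

lemma pj1 {j k : ℕ} (h : j*(3*j+1) = k*(3*k+1)) : j = k := by
  rcases lt_trichotomy j k with h' | h' | h'
  · nlinarith
  · exact h'
  · nlinarith

lemma pj3 {j k : ℕ} (hj : 1 ≤ j) (hk : 1 ≤ k) (h : j*(3*j-1) = k*(3*k-1)) : j = k := by
  obtain ⟨a, rfl⟩ : ∃ a, j = a + 1 := ⟨j - 1, by omega⟩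
  obtain ⟨b, rfl⟩ : ∃ b, k = b + 1 := ⟨k - 1, by omega⟩
  have h' : (a+1)*(3*a+2) = (b+1)*(3*b+2) := by
    have e1 : 3*(a+1)-1 = 3*a+2 := by omega
    have e2 : 3*(b+1)-1 = 3*b+2 := by omega
    rw [e1, e2] at h; exact h
  rcases lt_trichotomy a b with h'' | h'' | h''
  · nlinarith
  · omega
  · nlinarith

lemma pj2 {j k : ℕ} (hj : 1 ≤ j) (hk : 1 ≤ k) (h : j*(3*j+1) = k*(3*k-1)) : False := by
  obtain ⟨b, rfl⟩ : ∃ b, k = b + 1 := ⟨k - 1, by omega⟩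
  have h' : j*(3*j+1) = (b+1)*(3*b+2) := by
    have e2 : 3*(b+1)-1 = 3*b+2 := by omega
    rw [e2] at h; exact h
  have hsq : (6*j+1)*(6*j+1) = (6*b+5)*(6*b+5) := by nlinarith [h']
  have := (Nat.mul_self_inj).mp hsq
  omega

lemma sum_zero_of (n : ℕ) (hn : 1 ≤ n) (s : Finset (Finset ℕ)) (hsub : s ⊆ Dn n)
    (hexc : ∀ A ∈ s, ∀ k, 1 ≤ k → A ≠ Finset.Icc k (2*k-1) ∧ A ≠ Finset.Icc (k+1) (2*k))
    (hcl : ∀ A ∈ s, phi A ∈ s) :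
    ∑ A ∈ s, (-1:ℤ)^A.card = 0 := by
  apply Finset.sum_involution (fun A _ => phi A)
  · intro A ha
    exact neg_one_pow_cancel (Ne.symm (phi_good hn (hsub ha) (hexc A ha)).2.2.1)
  · intro A ha _ heq
    exact (phi_good hn (hsub ha) (hexc A ha)).2.2.1 (by rw [heq])
  · exact hcl
  · intro A ha
    exact (phi_good hn (hsub ha) (hexc A ha)).2.1

lemma exc_sum1 {n k : ℕ} (hk : 1 ≤ k) (h : Finset.Icc k (2*k-1) ∈ Dn n) :
    2 * n = k * (3*k-1) := by
  rw [mem_Dn] at h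
  have := (E1_sum k hk).1
  omega

lemma exc_sum2 {n k : ℕ} (hk : 1 ≤ k) (h : Finset.Icc (k+1) (2*k) ∈ Dn n) :
    2 * n = k * (3*k+1) := by
  rw [mem_Dn] at h
  have := (E2_sum k hk).1
  omega

lemma sum_Dn_none (n : ℕ) (hn : 1 ≤ n)
    (h : ¬ ∃ j, 0 < j ∧ (2*n = j*(3*j+1) ∨ 2*n = j*(3*j-1))) :
    ∑ A ∈ Dn n, (-1:ℤ)^A.card = 0 := by
  have hexc : ∀ A ∈ Dn n, ∀ k, 1 ≤ k →
      A ≠ Finset.Icc k (2*k-1) ∧ A ≠ Finset.Icc (k+1) (2*k) := by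
    intro A hA k hk
    constructor
    · rintro rfl
      exact h ⟨k, hk, Or.inr (exc_sum1 hk hA)⟩
    · rintro rfl
      exact h ⟨k, hk, Or.inl (exc_sum2 hk hA)⟩
  apply sum_zero_of n hn _ (Finset.Subset.refl _) hexc
  intro A hA
  exact (phi_good hn hA (hexc A hA)).1

lemma sum_Dn_pent1 (n j : ℕ) (hn : 1 ≤ n) (hj : 1 ≤ j) (h : 2*n = j*(3*j+1)) :
    ∑ A ∈ Dn n, (-1:ℤ)^A.card = (-1)^j := by
  set A₀ := Finset.Icc (j+1) (2*j) with hA₀def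
  have hA₀ : A₀ ∈ Dn n := by
    rw [mem_Dn]
    constructor
    · rw [hA₀def, Finset.mem_Icc]; omega
    · rw [hA₀def]; have := (E2_sum j hj).1; omega
  have hexc : ∀ A ∈ (Dn n).erase A₀, ∀ k, 1 ≤ k →
      A ≠ Finset.Icc k (2*k-1) ∧ A ≠ Finset.Icc (k+1) (2*k) := by
    intro A hA k hk
    rw [Finset.mem_erase] at hA
    constructor
    · rintro rfl
      exact pj2 hj hk (by rw [← h, exc_sum1 hk hA.2])
    · rintro rfl
      have := exc_sum2 hk hA.2
      have hkj : k = j := pj1 (by omega)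
      exact hA.1 (by rw [hkj])
  have hz : ∑ A ∈ (Dn n).erase A₀, (-1:ℤ)^A.card = 0 := by
    apply sum_zero_of n hn _ (Finset.erase_subset _ _) hexc
    intro A hA
    rw [Finset.mem_erase] at hA ⊢
    have hg := phi_good hn hA.2 (hexc A (Finset.mem_erase.2 hA))
    exact ⟨(hg.2.2.2 j hj).2, hg.1⟩
  rw [← Finset.add_sum_erase _ _ hA₀, hz, add_zero, (E2_sum j hj).2]

lemma sum_Dn_pent2 (n j : ℕ) (hn : 1 ≤ n) (hj : 1 ≤ j) (h : 2*n = j*(3*j-1)) :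
    ∑ A ∈ Dn n, (-1:ℤ)^A.card = (-1)^j := by
  set A₀ := Finset.Icc j (2*j-1) with hA₀def
  have hA₀ : A₀ ∈ Dn n := by
    rw [mem_Dn]
    constructor
    · rw [hA₀def, Finset.mem_Icc]; omega
    · rw [hA₀def]; have := (E1_sum j hj).1; omega
  have hexc : ∀ A ∈ (Dn n).erase A₀, ∀ k, 1 ≤ k →
      A ≠ Finset.Icc k (2*k-1) ∧ A ≠ Finset.Icc (k+1) (2*k) := by
    intro A hA k hk
    rw [Finset.mem_erase] at hA
    constructor
    · rintro rfl
      have := exc_sum1 hk hA.2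
      have hkj : k = j := pj3 hk hj (by omega)
      exact hA.1 (by rw [hkj])
    · rintro rfl
      exact pj2 hk hj (by rw [← exc_sum2 hk hA.2, h])
  have hz : ∑ A ∈ (Dn n).erase A₀, (-1:ℤ)^A.card = 0 := by
    apply sum_zero_of n hn _ (Finset.erase_subset _ _) hexc
    intro A hA
    rw [Finset.mem_erase] at hA ⊢
    have hg := phi_good hn hA.2 (hexc A (Finset.mem_erase.2 hA))
    exact ⟨(hg.2.2.2 j hj).1, hg.1⟩
  rw [← Finset.add_sum_erase _ _ hA₀, hz, add_zero, (E1_sum j hj).2]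

end Franklin

lemma sum_dist_eq (n : ℕ) :
    ∑ π ∈ distinctPartitions n, (-1 : ℤ) ^ numParts π =
      ∑ A ∈ Franklin.Dn n, (-1 : ℤ) ^ A.card := by
  refine Finset.sum_bij' (fun (π : n.Partition) (_ : π ∈ distinctPartitions n) => π.parts.toFinset)
    (fun A hA =>
      { parts := A.val
        parts_pos := fun {i} hi => Nat.pos_of_ne_zero (by
          rintro rfl
          exact (Franklin.mem_Dn.1 hA).1 (Finset.mem_def.2 hi))
        parts_sum := by
          have h := (Franklin.mem_Dn.1 hA).2
          rw [Finset.sum] at h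
          simpa using h }) ?_ ?_ ?_ ?_ ?_
  · intro π hπ
    have hnd : π.parts.Nodup := by
      simpa [distinctPartitions] using hπ
    rw [Franklin.mem_Dn]
    constructor
    · intro hc
      rw [Multiset.mem_toFinset] at hc
      exact absurd (π.parts_pos hc) (lt_irrefl 0)
    · rw [Finset.sum]
      simp only [Multiset.map_id']
      rw [Multiset.toFinset_val, hnd.dedup]
      exact π.parts_sum
  · intro A hA
    simp only [distinctPartitions, Finset.mem_filter, Finset.mem_univ, true_and]
    exact A.nodup
  · intro π hπ
    have hnd : π.parts.Nodup := by
      simpa [distinctPartitions] using hπ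
    apply Nat.Partition.ext
    simp only
    rw [Multiset.toFinset_val, hnd.dedup]
  · intro A hA
    simp only
    exact Finset.val_toFinset A
  · intro π hπ
    have hnd : π.parts.Nodup := by
      simpa [distinctPartitions] using hπ
    congr 1
    rw [numParts]
    rw [Finset.card, Multiset.toFinset_val, hnd.dedup]

lemma distinctPartitions2_eq (n : ℕ) (hn : 1 ≤ n) :
    distinctPartitions2 n = (distinctPartitions n).erase (Nat.Partition.indiscrete n) := by
  ext π
  simp only [distinctPartitions, distinctPartitions2, Finset.mem_erase, Finset.mem_filter,
    Finset.mem_univ, true_and]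
  constructor
  · rintro ⟨hnd, hcard⟩
    refine ⟨?_, hnd⟩
    rintro rfl
    rw [Nat.Partition.indiscrete_parts (show n ≠ 0 by omega)] at hcard
    simp at hcard
  · rintro ⟨hne, hnd⟩
    refine ⟨hnd, ?_⟩
    by_contra hc
    push_neg at hc
    rcases h1 : Multiset.card π.parts with _ | m
    · have hz : π.parts = 0 := Multiset.card_eq_zero.1 h1
      have := π.parts_sum
      rw [hz] at this
      simp at this
      omega
    · rcases m with _ | m
      · obtain ⟨a, ha⟩ := Multiset.card_eq_one.1 h1
        have hsum := π.parts_sum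
        rw [ha] at hsum
        simp at hsum
        apply hne
        apply Nat.Partition.ext
        rw [ha, hsum, Nat.Partition.indiscrete_parts (show n ≠ 0 by omega)]
      · omega

theorem stmt12 (n : ℕ) (hn : 1 ≤ n) :
    (∀ j : ℕ, 0 < j → (2 * n = j * (3 * j + 1) ∨ 2 * n = j * (3 * j - 1)) →
        (∑ π ∈ distinctPartitions2 n, (-1 : ℤ) ^ numParts π) = 1 + (-1) ^ j) ∧
    ((¬ ∃ j : ℕ, 0 < j ∧ (2 * n = j * (3 * j + 1) ∨ 2 * n = j * (3 * j - 1))) →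
        (∑ π ∈ distinctPartitions2 n, (-1 : ℤ) ^ numParts π) = 1) := by
  have hmem : Nat.Partition.indiscrete n ∈ distinctPartitions n := by
    simp [distinctPartitions, Nat.Partition.indiscrete_parts (show n ≠ 0 by omega)]
  have h1 : numParts (Nat.Partition.indiscrete n) = 1 := by
    rw [numParts, Nat.Partition.indiscrete_parts (show n ≠ 0 by omega)]
    rfl
  have key : ∀ v : ℤ, (∑ A ∈ Franklin.Dn n, (-1:ℤ)^A.card = v) →
      ∑ π ∈ distinctPartitions2 n, (-1:ℤ)^numParts π = v + 1 := by
    intro v hv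
    have h2 := Finset.add_sum_erase _ (fun π => (-1:ℤ)^numParts π) hmem
    rw [← distinctPartitions2_eq n hn] at h2
    rw [sum_dist_eq n, hv, h1] at h2
    linarith
  constructor
  · intro j hj hcase
    rcases hcase with h | h
    · rw [key _ (Franklin.sum_Dn_pent1 n j hn hj h)]; ring
    · rw [key _ (Franklin.sum_Dn_pent2 n j hn hj h)]; ring
  · intro h
    rw [key 0 (Franklin.sum_Dn_none n hn h)]
    norm_num


end PaperFFW
end
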